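/- arXiv:2009.05291 — 4 statements merged into one kernel-verified Lean document; each statement's English description precedes it below -/
import Mathlib

section
/- Let A = ℂ[u,v,x_1,...,x_n]/(uv − f_1^{a_1}···f_t^{a_t}), where the f_i ∈ ℂ[x_1,...,x_n] are irreducible and pairwise coprime and each a_i ≥ 1. Then A is a normal integral domain. -/
universe u v

open MvPolynomial

/-- The ideal `(uv - f₁^{a₁} ⋯ f_t^{a_t})` of the polynomial ring `ℂ[u,v,x₁,…,xₙ]`,
where `u, v` are the two variables indexed by `Fin 2` and `x₁, …, xₙ` are the variables
indexed by `Fin n`, and the `fᵢ` are polynomials in the variables `x₁, …, xₙ` only. -/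
noncomputable def hyperIdeal (n t : ℕ) (f : Fin t → MvPolynomial (Fin n) ℂ)
    (a : Fin t → ℕ) : Ideal (MvPolynomial (Fin 2 ⊕ Fin n) ℂ) :=
  Ideal.span
    {X (Sum.inl 0) * X (Sum.inl 1) - ∏ i, (rename Sum.inr (f i)) ^ a i}

/-- The hypersurface ring `A = ℂ[u,v,x₁,…,xₙ]/(uv - f₁^{a₁} ⋯ f_t^{a_t})`. -/
abbrev HyperRing (n t : ℕ) (f : Fin t → MvPolynomial (Fin n) ℂ) (a : Fin t → ℕ) : Type :=
  MvPolynomial (Fin 2 ⊕ Fin n) ℂ ⧸ hyperIdeal n t f a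

/-- The image of the variable `u` in the hypersurface ring `A`. -/
noncomputable def uElem (n t : ℕ) (f : Fin t → MvPolynomial (Fin n) ℂ) (a : Fin t → ℕ) :
    HyperRing n t f a :=
  Ideal.Quotient.mk (hyperIdeal n t f a) (X (Sum.inl 0))

set_option synthInstance.maxHeartbeats 1000000
set_option maxHeartbeats 2000000
set_option linter.unusedVariables false

namespace HyperNormalAux

abbrev Rx (n : ℕ) : Type := MvPolynomial (Fin n) ℂ
abbrev B (n : ℕ) : Type := Polynomial (Rx n)
abbrev F (n : ℕ) : Type := FractionRing (B n)
abbrev P (n : ℕ) : Type := MvPolynomial (Fin 2 ⊕ Fin n) ℂ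

variable {n : ℕ}

noncomputable def θ (n : ℕ) : Rx n →+* F n := (algebraMap (B n) (F n)).comp Polynomial.C

noncomputable def TT (n : ℕ) : F n := algebraMap (B n) (F n) Polynomial.X

lemma θ_injective : Function.Injective (θ n) :=
  (IsFractionRing.injective (B n) (F n)).comp Polynomial.C_injective

lemma αF_injective : Function.Injective (algebraMap (B n) (F n)) :=
  IsFractionRing.injective (B n) (F n)

lemma TT_ne_zero : TT n ≠ 0 := by
  simp only [TT, ne_eq, map_eq_zero_iff _ αF_injective]
  exact Polynomial.X_ne_zero

noncomputable def Vg (g₀ : Rx n) : F n := θ n g₀ * (TT n)⁻¹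

lemma TT_mul_Vg (g₀ : Rx n) : TT n * Vg g₀ = θ n g₀ := by
  rw [Vg, mul_comm (θ n g₀), ← mul_assoc, mul_inv_cancel₀ TT_ne_zero, one_mul]

lemma θ_ne_zero {g₀ : Rx n} (hg : g₀ ≠ 0) : θ n g₀ ≠ 0 := by
  simpa [map_eq_zero_iff _ θ_injective] using hg

lemma Vg_ne_zero {g₀ : Rx n} (hg : g₀ ≠ 0) : Vg g₀ ≠ 0 :=
  mul_ne_zero (θ_ne_zero hg) (inv_ne_zero TT_ne_zero)

noncomputable def ξ (n : ℕ) : Rx n →+* P n :=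
  (rename (Sum.inr : Fin n → Fin 2 ⊕ Fin n) : Rx n →ₐ[ℂ] P n).toRingHom

noncomputable def ιu (n : ℕ) : B n →+* P n := Polynomial.eval₂RingHom (ξ n) (X (Sum.inl 0))
noncomputable def ιv (n : ℕ) : B n →+* P n := Polynomial.eval₂RingHom (ξ n) (X (Sum.inl 1))

noncomputable def φ (g₀ : Rx n) : P n →+* F n :=
  MvPolynomial.eval₂Hom ((θ n).comp MvPolynomial.C)
    (Sum.elim ![TT n, Vg g₀] fun j => θ n (MvPolynomial.X j))

@[simp] lemma phi_u (g₀ : Rx n) : φ g₀ (X (Sum.inl 0)) = TT n := by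
  simp [φ]

@[simp] lemma phi_v (g₀ : Rx n) : φ g₀ (X (Sum.inl 1)) = Vg g₀ := by
  simp [φ]

@[simp] lemma phi_x (g₀ : Rx n) (j : Fin n) : φ g₀ (X (Sum.inr j)) = θ n (X j) := by
  simp [φ]

@[simp] lemma phi_ξ (g₀ : Rx n) (r : Rx n) : φ g₀ (ξ n r) = θ n r := by
  have h : (φ g₀).comp (ξ n) = θ n := by
    apply MvPolynomial.ringHom_ext
    · intro a
      simp [ξ, φ]
    · intro i
      simp [ξ, φ]
  exact DFunLike.congr_fun h r

lemma ET_eq : Polynomial.eval₂RingHom (θ n) (TT n) = algebraMap (B n) (F n) := by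
  apply Polynomial.ringHom_ext
  · intro a; simp [θ]
  · simp [TT]

@[simp] lemma phi_ιu (g₀ : Rx n) (b : B n) : φ g₀ (ιu n b) = algebraMap (B n) (F n) b := by
  have h : (φ g₀).comp (ιu n) = Polynomial.eval₂RingHom (θ n) (TT n) := by
    apply Polynomial.ringHom_ext
    · intro a; simp [ιu]
    · simp [ιu]
  rw [← ET_eq]
  exact DFunLike.congr_fun h b

@[simp] lemma phi_ιv (g₀ : Rx n) (b : B n) : φ g₀ (ιv n b) = Polynomial.eval₂ (θ n) (Vg g₀) b := by
  have h : (φ g₀).comp (ιv n) = Polynomial.eval₂RingHom (θ n) (Vg g₀) := by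
    apply Polynomial.ringHom_ext
    · intro a; simp [ιv]
    · simp [ιv]
  exact DFunLike.congr_fun h b
noncomputable def tw (g₀ : Rx n) (b : B n) (N : ℕ) : B n :=
  ∑ j ∈ Finset.range (N+1), Polynomial.C (b.coeff j * g₀ ^ j) * Polynomial.X ^ (N - j)

lemma tw_coeff_le (g₀ : Rx n) (b : B n) {N k : ℕ} (hk : k ≤ N) :
    (tw g₀ b N).coeff k = b.coeff (N - k) * g₀ ^ (N - k) := by
  rw [tw, Polynomial.finset_sum_coeff]
  rw [Finset.sum_eq_single (N - k)]
  · rw [Nat.sub_sub_self hk, Polynomial.coeff_C_mul, Polynomial.coeff_X_pow, if_pos rfl, mul_one]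
  · intro j hj hne
    rw [Finset.mem_range] at hj
    simp only [Polynomial.coeff_C_mul, Polynomial.coeff_X_pow]
    rw [if_neg, mul_zero]
    intro h
    exact hne (by omega : j = N - k)
  · intro h
    exact absurd (Finset.mem_range.mpr (by omega)) h

lemma tw_coeff_gt (g₀ : Rx n) (b : B n) {N k : ℕ} (hk : N < k) :
    (tw g₀ b N).coeff k = 0 := by
  rw [tw, Polynomial.finset_sum_coeff]
  apply Finset.sum_eq_zero
  intro j hj
  simp only [Finset.mem_range] at hj
  simp only [Polynomial.coeff_C_mul, Polynomial.coeff_X_pow]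
  rw [if_neg (by omega), mul_zero]

lemma tw_eval (g₀ : Rx n) (s t : F n) (hst : s * t = θ n g₀) (b : B n) {N : ℕ}
    (hN : b.natDegree ≤ N) :
    Polynomial.eval₂ (θ n) s (tw g₀ b N) = Polynomial.eval₂ (θ n) t b * s ^ N := by
  rw [tw, Polynomial.eval₂_finset_sum,
    Polynomial.eval₂_eq_sum_range' (θ n) (Nat.lt_succ_of_le hN) t, Finset.sum_mul]
  apply Finset.sum_congr rfl
  intro j hj
  rw [Finset.mem_range, Nat.lt_succ_iff] at hj
  rw [Polynomial.eval₂_mul, Polynomial.eval₂_C, Polynomial.eval₂_X_pow, map_mul, map_pow,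
    ← hst]
  have : s ^ N = s ^ j * s ^ (N - j) := by rw [← pow_add, Nat.add_sub_cancel' hj]
  rw [this, mul_pow]
  ring


noncomputable def I (g₀ : Rx n) : Ideal (P n) :=
  Ideal.span {X (Sum.inl 0) * X (Sum.inl 1) - ξ n g₀}

lemma phi_pi (g₀ : Rx n) : φ g₀ (X (Sum.inl 0) * X (Sum.inl 1) - ξ n g₀) = 0 := by
  rw [map_sub, map_mul, phi_u, phi_v, phi_ξ, TT_mul_Vg, sub_self]

lemma phi_I (g₀ : Rx n) : ∀ p ∈ I g₀, φ g₀ p = 0 := by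
  intro p hp
  obtain ⟨c, rfl⟩ := Ideal.mem_span_singleton'.mp hp
  rw [map_mul, phi_pi, mul_zero]

noncomputable def ψ (g₀ : Rx n) : (P n ⧸ I g₀) →+* F n :=
  Ideal.Quotient.lift (I g₀) (φ g₀) (phi_I g₀)

@[simp] lemma psi_mk (g₀ : Rx n) (p : P n) :
    ψ g₀ (Ideal.Quotient.mk (I g₀) p) = φ g₀ p := rfl

@[simp] lemma ιu_C (r : Rx n) : ιu n (Polynomial.C r) = ξ n r := by simp [ιu]
@[simp] lemma ιv_C (r : Rx n) : ιv n (Polynomial.C r) = ξ n r := by simp [ιv]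
@[simp] lemma ιu_X : ιu n Polynomial.X = X (Sum.inl 0) := by simp [ιu]
@[simp] lemma ιv_X : ιv n Polynomial.X = X (Sum.inl 1) := by simp [ιv]
@[simp] lemma ξ_C (a : ℂ) : ξ n (MvPolynomial.C a) = MvPolynomial.C a := by simp [ξ]
@[simp] lemma ξ_X (j : Fin n) : ξ n (MvPolynomial.X j) = X (Sum.inr j) := by simp [ξ]

lemma NF (g₀ : Rx n) (p : P n) :
    ∃ b c : B n, Ideal.Quotient.mk (I g₀) p
      = Ideal.Quotient.mk (I g₀) (ιu n b + ιv n c) := by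
  induction p using MvPolynomial.induction_on with
  | C a =>
    exact ⟨Polynomial.C (MvPolynomial.C a), 0, by simp⟩
  | add p q hp hq =>
    obtain ⟨b1, c1, h1⟩ := hp
    obtain ⟨b2, c2, h2⟩ := hq
    refine ⟨b1 + b2, c1 + c2, ?_⟩
    rw [map_add, h1, h2, ← map_add]
    congr 1
    simp only [map_add]
    ring
  | mul_X p s hp =>
    obtain ⟨b, c, hbc⟩ := hp
    have hmul : Ideal.Quotient.mk (I g₀) (p * X s)
        = Ideal.Quotient.mk (I g₀) ((ιu n b + ιv n c) * X s) := by
      rw [map_mul, hbc, ← map_mul]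
    rcases s with i | j
    · rcases (by omega : i = 0 ∨ i = 1) with hi | hi <;> subst hi
      · -- u case
        refine ⟨b * Polynomial.X + Polynomial.C (c.coeff 0) * Polynomial.X,
          Polynomial.C g₀ * c.divX, ?_⟩
        rw [hmul, Ideal.Quotient.eq]
        apply Ideal.mem_span_singleton'.mpr
        refine ⟨ιv n c.divX, ?_⟩
        have hc : ιv n c = X (Sum.inl 1) * ιv n c.divX + ξ n (c.coeff 0) := by
          conv_lhs => rw [← Polynomial.X_mul_divX_add c]
          rw [map_add, map_mul, ιv_X, ιv_C]
        rw [hc]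
        simp only [map_add, map_mul, ιu_X, ιu_C, ιv_C]
        ring
      · -- v case
        refine ⟨Polynomial.C g₀ * b.divX,
          c * Polynomial.X + Polynomial.C (b.coeff 0) * Polynomial.X, ?_⟩
        rw [hmul, Ideal.Quotient.eq]
        apply Ideal.mem_span_singleton'.mpr
        refine ⟨ιu n b.divX, ?_⟩
        have hb : ιu n b = X (Sum.inl 0) * ιu n b.divX + ξ n (b.coeff 0) := by
          conv_lhs => rw [← Polynomial.X_mul_divX_add b]
          rw [map_add, map_mul, ιu_X, ιu_C]
        rw [hb]
        simp only [map_add, map_mul, ιv_X, ιv_C, ιu_C]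
        ring
    · refine ⟨b * Polynomial.C (MvPolynomial.X j), c * Polynomial.C (MvPolynomial.X j), ?_⟩
      rw [hmul]
      congr 1
      simp only [map_mul, ιu_C, ιv_C, ξ_X]
      ring


lemma inj_aux {g₀ : Rx n} (hg : g₀ ≠ 0) (b c : B n)
    (h : φ g₀ (ιu n b + ιv n c) = 0) : ιu n b + ιv n c = 0 := by
  set N := c.natDegree with hN
  have hTV := TT_mul_Vg (n := n) g₀
  rw [map_add, phi_ιu, phi_ιv] at h
  have key : b * Polynomial.X ^ N + tw g₀ c N = 0 := by
    apply αF_injective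
    rw [map_add, map_zero, ← ET_eq]
    have h1 : Polynomial.eval₂RingHom (θ n) (TT n) (b * Polynomial.X ^ N)
        = algebraMap (B n) (F n) b * TT n ^ N := by
      rw [map_mul, map_pow]
      rw [Polynomial.coe_eval₂RingHom, Polynomial.eval₂_X, ← ET_eq]
      rfl
    have h2 : Polynomial.eval₂RingHom (θ n) (TT n) (tw g₀ c N)
        = Polynomial.eval₂ (θ n) (Vg g₀) c * TT n ^ N := by
      rw [Polynomial.coe_eval₂RingHom]
      exact tw_eval g₀ (TT n) (Vg g₀) hTV c le_rfl
    rw [h1, h2, ← add_mul]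
    rw [show algebraMap (B n) (F n) b = Polynomial.eval₂ (θ n) (TT n) b from by
      rw [← ET_eq]; rfl] at *
    rw [h, zero_mul]
  have hb : ∀ i, 1 ≤ i → b.coeff i = 0 := by
    intro i hi
    have := congrArg (fun q => Polynomial.coeff q (N + i)) key
    simp only [Polynomial.coeff_add, Polynomial.coeff_zero] at this
    rwa [Polynomial.coeff_mul_X_pow', if_pos (by omega), Nat.add_sub_cancel_left,
      tw_coeff_gt g₀ c (by omega), add_zero] at this
  have hc : ∀ j, 1 ≤ j → c.coeff j = 0 := by
    intro j hj
    by_cases hjN : j ≤ N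
    · have := congrArg (fun q => Polynomial.coeff q (N - j)) key
      simp only [Polynomial.coeff_add, Polynomial.coeff_zero] at this
      rw [Polynomial.coeff_mul_X_pow', if_neg (by omega),
        tw_coeff_le g₀ c (by omega : N - j ≤ N), zero_add,
        (by omega : N - (N - j) = j)] at this
      rcases mul_eq_zero.mp this with h' | h'
      · exact h'
      · exact absurd h' (pow_ne_zero _ hg)
    · exact Polynomial.coeff_eq_zero_of_natDegree_lt (by omega)
  have h0 : b.coeff 0 + c.coeff 0 = 0 := by
    have := congrArg (fun q => Polynomial.coeff q N) key
    simp only [Polynomial.coeff_add, Polynomial.coeff_zero] at this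
    rwa [Polynomial.coeff_mul_X_pow', if_pos le_rfl, Nat.sub_self,
      tw_coeff_le g₀ c le_rfl, Nat.sub_self, pow_zero, mul_one] at this
  have hbC : b = Polynomial.C (b.coeff 0) := by
    refine Polynomial.ext fun i => ?_
    cases i with
    | zero => simp
    | succ i => rw [Polynomial.coeff_C, if_neg (by omega)]; exact hb (i+1) (by omega)
  have hcC : c = Polynomial.C (c.coeff 0) := by
    refine Polynomial.ext fun i => ?_
    cases i with
    | zero => simp
    | succ i => rw [Polynomial.coeff_C, if_neg (by omega)]; exact hc (i+1) (by omega)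
  rw [hbC, hcC, ιu_C, ιv_C, ← map_add, h0, map_zero]

lemma psi_inj {g₀ : Rx n} (hg : g₀ ≠ 0) : Function.Injective (ψ g₀) := by
  rw [injective_iff_map_eq_zero]
  intro α hα
  obtain ⟨p, rfl⟩ := Ideal.Quotient.mk_surjective α
  obtain ⟨b, c, hbc⟩ := NF g₀ p
  rw [hbc] at hα ⊢
  rw [psi_mk] at hα
  rw [inj_aux hg b c hα, map_zero]


lemma aux_closed {R S : Type*} [CommRing R] [IsDomain R] [IsIntegrallyClosed R] [Field S]
    (χ : R →+* S) (hinj : Function.Injective χ)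
    (hsurj : ∀ z : S, ∃ b₁ b₂ : R, χ b₂ ≠ 0 ∧ z * χ b₂ = χ b₁)
    (w : S) (q : Polynomial R) (hq : q.Monic) (hw : Polynomial.eval₂ χ w q = 0) :
    ∃ b, χ b = w := by
  letI : Algebra R S := χ.toAlgebra
  have halg : algebraMap R S = χ := rfl
  haveI : IsFractionRing R S := by
    refine ⟨?_, ?_, ?_⟩
    · rintro ⟨y, hy⟩
      rw [halg]
      rw [isUnit_iff_ne_zero]
      exact fun h0 => (mem_nonZeroDivisors_iff_ne_zero.mp hy) (hinj (h0.trans (map_zero χ).symm))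
    · intro z
      obtain ⟨b₁, b₂, hb₂, hzb⟩ := hsurj z
      refine ⟨(b₁, ⟨b₂, mem_nonZeroDivisors_iff_ne_zero.mpr fun h => hb₂ (by rw [h, map_zero])⟩), ?_⟩
      simpa [halg] using hzb
    · intro x y hxy
      refine ⟨1, ?_⟩
      simp only [OneMemClass.coe_one, one_mul]
      exact hinj (by simpa [halg] using hxy)
  have hint : IsIntegral R w := ⟨q, hq, by rwa [halg]⟩
  obtain ⟨y, hy⟩ := IsIntegrallyClosed.isIntegral_iff.mp hint
  exact ⟨y, by rwa [halg] at hy⟩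


lemma ET_apply (b : B n) : Polynomial.eval₂ (θ n) (TT n) b = algebraMap (B n) (F n) b := by
  rw [← ET_eq]; rfl

lemma EV_tw (g₀ : Rx n) (b : B n) {N : ℕ} (hN : b.natDegree ≤ N) :
    algebraMap (B n) (F n) (tw g₀ b N)
      = Polynomial.eval₂ (θ n) (Vg g₀) b * TT n ^ N := by
  rw [← ET_apply]
  exact tw_eval g₀ (TT n) (Vg g₀) (TT_mul_Vg g₀) b hN

lemma VT_tw (g₀ : Rx n) (b : B n) {N : ℕ} (hN : b.natDegree ≤ N) :
    Polynomial.eval₂ (θ n) (Vg g₀) (tw g₀ b N)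
      = algebraMap (B n) (F n) b * Vg g₀ ^ N := by
  rw [← ET_apply]
  exact tw_eval g₀ (Vg g₀) (TT n) (by rw [mul_comm]; exact TT_mul_Vg g₀) b hN

lemma TT_def : algebraMap (B n) (F n) Polynomial.X = TT n := rfl

lemma psi_mulT (g₀ : Rx n) (α : P n ⧸ I g₀) :
    ∃ k : ℕ, ∀ m, k ≤ m → ∃ d : B n, ψ g₀ α * TT n ^ m = algebraMap (B n) (F n) d := by
  obtain ⟨p, rfl⟩ := Ideal.Quotient.mk_surjective α
  obtain ⟨b, c, hbc⟩ := NF g₀ p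
  rw [hbc]
  refine ⟨c.natDegree, fun m hm => ⟨b * Polynomial.X ^ m + tw g₀ c c.natDegree
    * Polynomial.X ^ (m - c.natDegree), ?_⟩⟩
  have h1 : ψ g₀ (Ideal.Quotient.mk (I g₀) (ιu n b + ιv n c))
      = algebraMap (B n) (F n) b + Polynomial.eval₂ (θ n) (Vg g₀) c := by
    rw [psi_mk, map_add, phi_ιu, phi_ιv]
  rw [h1, add_mul, map_add]
  congr 1
  · rw [map_mul, map_pow, TT_def]
  · rw [map_mul, map_pow, EV_tw g₀ c le_rfl, mul_assoc, TT_def, ← pow_add,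
      Nat.add_sub_cancel' hm]

lemma psi_mulV (g₀ : Rx n) (α : P n ⧸ I g₀) :
    ∃ k : ℕ, ∀ m, k ≤ m →
      ∃ d : B n, ψ g₀ α * Vg g₀ ^ m = Polynomial.eval₂ (θ n) (Vg g₀) d := by
  obtain ⟨p, rfl⟩ := Ideal.Quotient.mk_surjective α
  obtain ⟨b, c, hbc⟩ := NF g₀ p
  rw [hbc]
  refine ⟨b.natDegree, fun m hm => ⟨tw g₀ b b.natDegree * Polynomial.X ^ (m - b.natDegree)
    + c * Polynomial.X ^ m, ?_⟩⟩
  have h1 : ψ g₀ (Ideal.Quotient.mk (I g₀) (ιu n b + ιv n c))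
      = algebraMap (B n) (F n) b + Polynomial.eval₂ (θ n) (Vg g₀) c := by
    rw [psi_mk, map_add, phi_ιu, phi_ιv]
  rw [h1, add_mul, Polynomial.eval₂_add]
  congr 1
  · rw [Polynomial.eval₂_mul, Polynomial.eval₂_pow, Polynomial.eval₂_X,
      VT_tw g₀ b le_rfl, mul_assoc, ← pow_add, Nat.add_sub_cancel' hm]
  · rw [Polynomial.eval₂_mul, Polynomial.eval₂_pow, Polynomial.eval₂_X]

end HyperNormalAux

namespace HyperNormalAux

variable {n : ℕ}

lemma EV_inj {g₀ : Rx n} (hg : g₀ ≠ 0) (b : B n)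
    (h : Polynomial.eval₂ (θ n) (Vg g₀) b = 0) : b = 0 := by
  have key : tw g₀ b b.natDegree = 0 := by
    apply αF_injective
    rw [EV_tw g₀ b le_rfl, h, zero_mul, map_zero]
  refine Polynomial.ext fun i => ?_
  rw [Polynomial.coeff_zero]
  by_cases hi : i ≤ b.natDegree
  · have h2 := congrArg (fun p' => Polynomial.coeff p' (b.natDegree - i)) key
    simp only [Polynomial.coeff_zero] at h2
    rw [tw_coeff_le g₀ b (by omega),
      (by omega : b.natDegree - (b.natDegree - i) = i)] at h2
    rcases mul_eq_zero.mp h2 with h' | h'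
    · exact h'
    · exact absurd h' (pow_ne_zero _ hg)
  · exact Polynomial.coeff_eq_zero_of_natDegree_lt (by omega)

lemma alphaF_ne_zero {b : B n} (hb : b ≠ 0) : algebraMap (B n) (F n) b ≠ 0 := by
  simpa [map_eq_zero_iff _ αF_injective] using hb

lemma alphaF_surj (z : F n) : ∃ b₁ b₂ : B n, algebraMap (B n) (F n) b₂ ≠ 0 ∧
    z * algebraMap (B n) (F n) b₂ = algebraMap (B n) (F n) b₁ := by
  obtain ⟨p, q, hq, hz⟩ := IsFractionRing.div_surjective (A := B n) z
  have hqF : algebraMap (B n) (F n) q ≠ 0 :=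
    alphaF_ne_zero (mem_nonZeroDivisors_iff_ne_zero.mp hq)
  refine ⟨p, q, hqF, ?_⟩
  rw [← hz]
  field_simp

lemma EV_surj {g₀ : Rx n} (hg : g₀ ≠ 0) (z : F n) :
    ∃ b₁ b₂ : B n, Polynomial.eval₂ (θ n) (Vg g₀) b₂ ≠ 0 ∧
      z * Polynomial.eval₂ (θ n) (Vg g₀) b₂ = Polynomial.eval₂ (θ n) (Vg g₀) b₁ := by
  obtain ⟨p, q, hq, hz⟩ := IsFractionRing.div_surjective (A := B n) z
  have hqF : algebraMap (B n) (F n) q ≠ 0 :=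
    alphaF_ne_zero (mem_nonZeroDivisors_iff_ne_zero.mp hq)
  refine ⟨tw g₀ p p.natDegree * Polynomial.X ^ q.natDegree,
    tw g₀ q q.natDegree * Polynomial.X ^ p.natDegree, ?_, ?_⟩
  · rw [Polynomial.eval₂_mul, Polynomial.eval₂_pow, Polynomial.eval₂_X, VT_tw g₀ q le_rfl]
    exact mul_ne_zero (mul_ne_zero hqF (pow_ne_zero _ (Vg_ne_zero hg)))
      (pow_ne_zero _ (Vg_ne_zero hg))
  · rw [Polynomial.eval₂_mul, Polynomial.eval₂_pow, Polynomial.eval₂_X, VT_tw g₀ q le_rfl,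
      Polynomial.eval₂_mul, Polynomial.eval₂_pow, Polynomial.eval₂_X, VT_tw g₀ p le_rfl, ← hz]
    field_simp

theorem main (n : ℕ) (g₀ : Rx n) (hg : g₀ ≠ 0) :
    IsDomain (P n ⧸ I g₀) ∧ IsIntegrallyClosed (P n ⧸ I g₀) := by
  classical
  haveI hdom : IsDomain (P n ⧸ I g₀) := Function.Injective.isDomain (ψ g₀) (psi_inj hg)
  refine ⟨hdom, ?_⟩
  letI : Algebra (P n ⧸ I g₀) (F n) := (ψ g₀).toAlgebra
  have halg : algebraMap (P n ⧸ I g₀) (F n) = ψ g₀ := rfl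
  haveI : IsFractionRing (P n ⧸ I g₀) (F n) := by
    refine ⟨?_, ?_, ?_⟩
    · rintro ⟨y, hy⟩
      rw [halg, isUnit_iff_ne_zero]
      exact fun h0 =>
        mem_nonZeroDivisors_iff_ne_zero.mp hy (psi_inj hg (h0.trans (map_zero _).symm))
    · intro z
      obtain ⟨b₁, b₂, hb₂, hz⟩ := alphaF_surj z
      refine ⟨(Ideal.Quotient.mk _ (ιu n b₁),
        ⟨Ideal.Quotient.mk _ (ιu n b₂), mem_nonZeroDivisors_iff_ne_zero.mpr ?_⟩), ?_⟩
      · intro h0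
        apply hb₂
        rw [← phi_ιu g₀ b₂, ← psi_mk, h0, map_zero]
      · rw [halg]
        simpa only [psi_mk, phi_ιu] using hz
    · intro x y hxy
      refine ⟨1, ?_⟩
      simp only [OneMemClass.coe_one, one_mul]
      exact psi_inj hg (by simpa [halg] using hxy)
  rw [isIntegrallyClosed_iff (F n)]
  intro z hz
  obtain ⟨q, hqm, hqe⟩ := hz
  rw [halg] at hqe
  set n₀ := q.natDegree with hn₀
  have hn₀pos : 0 < n₀ := by
    rcases Nat.eq_zero_or_pos n₀ with h0 | h
    · exfalso
      have hq1 : q = 1 := hqm.natDegree_eq_zero.mp h0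
      rw [hq1, Polynomial.eval₂_one] at hqe
      exact one_ne_zero hqe
    · exact h
  have hsum : (∑ i ∈ Finset.range n₀, ψ g₀ (q.coeff i) * z ^ i) + z ^ n₀ = 0 := by
    have hexp := Polynomial.eval₂_eq_sum_range' (ψ g₀) (Nat.lt_succ_self n₀) z
    have hcoeff : q.coeff n₀ = 1 := by rw [hn₀]; exact hqm.coeff_natDegree
    rw [hexp, Finset.sum_range_succ, hcoeff, map_one, one_mul] at hqe
    exact hqe
  -- T side
  have hmulT := fun i => psi_mulT g₀ (q.coeff i)
  set m : ℕ := Finset.sup (Finset.range n₀) (fun i => (hmulT i).choose) with hmdef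
  have hdi : ∀ i, i < n₀ → ∃ dd : B n,
      ψ g₀ (q.coeff i) * TT n ^ (m * (n₀ - i)) = algebraMap (B n) (F n) dd := by
    intro i hi
    refine (hmulT i).choose_spec (m * (n₀ - i)) ?_
    have h1 : (hmulT i).choose ≤ m := by
      rw [hmdef]
      exact Finset.le_sup (f := fun i => (hmulT i).choose) (Finset.mem_range.mpr hi)
    exact le_trans h1 (Nat.le_mul_of_pos_right m (by omega))
  set d : ℕ → B n := fun i => if hi : i < n₀ then (hdi i hi).choose else 0 with hddef
  have hd : ∀ i, i < n₀ →
      ψ g₀ (q.coeff i) * TT n ^ (m * (n₀ - i)) = algebraMap (B n) (F n) (d i) := by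
    intro i hi
    rw [hddef]
    simp only [dif_pos hi]
    exact (hdi i hi).choose_spec
  set Q : Polynomial (B n) :=
    Polynomial.X ^ n₀ + ∑ i ∈ Finset.range n₀, Polynomial.C (d i) * Polynomial.X ^ i with hQdef
  have hQm : Q.Monic := by
    apply Polynomial.monic_X_pow_add
    apply lt_of_le_of_lt (Polynomial.degree_sum_le _ _)
    rw [Finset.sup_lt_iff (by exact_mod_cast WithBot.bot_lt_coe n₀)]
    intro i hi
    exact lt_of_le_of_lt (Polynomial.degree_C_mul_X_pow_le i (d i))
      (by exact_mod_cast Finset.mem_range.mp hi)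
  have hQe : Polynomial.eval₂ (algebraMap (B n) (F n)) (TT n ^ m * z) Q = 0 := by
    rw [hQdef, Polynomial.eval₂_add, Polynomial.eval₂_X_pow, Polynomial.eval₂_finset_sum]
    have hterm : ∀ i ∈ Finset.range n₀,
        Polynomial.eval₂ (algebraMap (B n) (F n)) (TT n ^ m * z)
          (Polynomial.C (d i) * Polynomial.X ^ i)
        = TT n ^ (m * n₀) * (ψ g₀ (q.coeff i) * z ^ i) := by
      intro i hi
      have hi' := Finset.mem_range.mp hi
      rw [Polynomial.eval₂_mul, Polynomial.eval₂_C, Polynomial.eval₂_X_pow, ← hd i hi',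
        mul_pow, ← pow_mul]
      have hpow : TT n ^ (m * (n₀ - i)) * TT n ^ (m * i) = TT n ^ (m * n₀) := by
        rw [← pow_add, ← Nat.mul_add, Nat.sub_add_cancel (le_of_lt hi')]
      calc ψ g₀ (q.coeff i) * TT n ^ (m * (n₀ - i)) * (TT n ^ (m * i) * z ^ i)
          = TT n ^ (m * (n₀ - i)) * TT n ^ (m * i) * (ψ g₀ (q.coeff i) * z ^ i) := by ring
        _ = TT n ^ (m * n₀) * (ψ g₀ (q.coeff i) * z ^ i) := by rw [hpow]
    rw [Finset.sum_congr rfl hterm, ← Finset.mul_sum, mul_pow, ← pow_mul]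
    calc (TT n ^ (m * n₀)) * z ^ n₀ + TT n ^ (m * n₀) * ∑ i ∈ Finset.range n₀,
          ψ g₀ (q.coeff i) * z ^ i
        = TT n ^ (m * n₀) * ((∑ i ∈ Finset.range n₀, ψ g₀ (q.coeff i) * z ^ i) + z ^ n₀) := by
          ring
      _ = 0 := by rw [hsum, mul_zero]
  obtain ⟨b, hb⟩ := aux_closed (algebraMap (B n) (F n)) αF_injective alphaF_surj
    (TT n ^ m * z) Q hQm hQe
  -- V side
  have hmulV := fun i => psi_mulV g₀ (q.coeff i)
  set m' : ℕ := Finset.sup (Finset.range n₀) (fun i => (hmulV i).choose) with hm'def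
  have hdi' : ∀ i, i < n₀ → ∃ dd : B n,
      ψ g₀ (q.coeff i) * Vg g₀ ^ (m' * (n₀ - i)) = Polynomial.eval₂ (θ n) (Vg g₀) dd := by
    intro i hi
    refine (hmulV i).choose_spec (m' * (n₀ - i)) ?_
    have h1 : (hmulV i).choose ≤ m' := by
      rw [hm'def]
      exact Finset.le_sup (f := fun i => (hmulV i).choose) (Finset.mem_range.mpr hi)
    exact le_trans h1 (Nat.le_mul_of_pos_right m' (by omega))
  set d' : ℕ → B n := fun i => if hi : i < n₀ then (hdi' i hi).choose else 0 with hd'def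
  have hd' : ∀ i, i < n₀ →
      ψ g₀ (q.coeff i) * Vg g₀ ^ (m' * (n₀ - i)) = Polynomial.eval₂ (θ n) (Vg g₀) (d' i) := by
    intro i hi
    rw [hd'def]
    simp only [dif_pos hi]
    exact (hdi' i hi).choose_spec
  set Q' : Polynomial (B n) :=
    Polynomial.X ^ n₀ + ∑ i ∈ Finset.range n₀, Polynomial.C (d' i) * Polynomial.X ^ i with hQ'def
  have hQ'm : Q'.Monic := by
    apply Polynomial.monic_X_pow_add
    apply lt_of_le_of_lt (Polynomial.degree_sum_le _ _)
    rw [Finset.sup_lt_iff (by exact_mod_cast WithBot.bot_lt_coe n₀)]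
    intro i hi
    exact lt_of_le_of_lt (Polynomial.degree_C_mul_X_pow_le i (d' i))
      (by exact_mod_cast Finset.mem_range.mp hi)
  have hQ'e : Polynomial.eval₂ (Polynomial.eval₂RingHom (θ n) (Vg g₀)) (Vg g₀ ^ m' * z) Q'
      = 0 := by
    rw [hQ'def, Polynomial.eval₂_add, Polynomial.eval₂_X_pow, Polynomial.eval₂_finset_sum]
    have hterm : ∀ i ∈ Finset.range n₀,
        Polynomial.eval₂ (Polynomial.eval₂RingHom (θ n) (Vg g₀)) (Vg g₀ ^ m' * z)
          (Polynomial.C (d' i) * Polynomial.X ^ i)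
        = Vg g₀ ^ (m' * n₀) * (ψ g₀ (q.coeff i) * z ^ i) := by
      intro i hi
      have hi' := Finset.mem_range.mp hi
      rw [Polynomial.eval₂_mul, Polynomial.eval₂_C, Polynomial.eval₂_X_pow]
      rw [Polynomial.coe_eval₂RingHom, ← hd' i hi', mul_pow, ← pow_mul]
      have hpow : Vg g₀ ^ (m' * (n₀ - i)) * Vg g₀ ^ (m' * i) = Vg g₀ ^ (m' * n₀) := by
        rw [← pow_add, ← Nat.mul_add, Nat.sub_add_cancel (le_of_lt hi')]
      calc ψ g₀ (q.coeff i) * Vg g₀ ^ (m' * (n₀ - i)) * (Vg g₀ ^ (m' * i) * z ^ i)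
          = Vg g₀ ^ (m' * (n₀ - i)) * Vg g₀ ^ (m' * i) * (ψ g₀ (q.coeff i) * z ^ i) := by ring
        _ = Vg g₀ ^ (m' * n₀) * (ψ g₀ (q.coeff i) * z ^ i) := by rw [hpow]
    rw [Finset.sum_congr rfl hterm, ← Finset.mul_sum, mul_pow, ← pow_mul]
    calc (Vg g₀ ^ (m' * n₀)) * z ^ n₀ + Vg g₀ ^ (m' * n₀) * ∑ i ∈ Finset.range n₀,
          ψ g₀ (q.coeff i) * z ^ i
        = Vg g₀ ^ (m' * n₀) * ((∑ i ∈ Finset.range n₀, ψ g₀ (q.coeff i) * z ^ i) + z ^ n₀) := by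
          ring
      _ = 0 := by rw [hsum, mul_zero]
  obtain ⟨b', hb'⟩ := aux_closed (Polynomial.eval₂RingHom (θ n) (Vg g₀))
    ((injective_iff_map_eq_zero _).mpr (fun bb hbb => EV_inj hg bb hbb))
    (fun zz => EV_surj hg zz) (Vg g₀ ^ m' * z) Q' hQ'm hQ'e
  have hb'' : Polynomial.eval₂ (θ n) (Vg g₀) b' = Vg g₀ ^ m' * z := hb'
  -- combine
  set D := b'.natDegree with hDdef
  have key : tw g₀ b' D * Polynomial.X ^ (m + m') = b * Polynomial.C (g₀ ^ m')
      * Polynomial.X ^ D := by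
    apply αF_injective
    have hC : algebraMap (B n) (F n) (Polynomial.C (g₀ ^ m')) = θ n g₀ ^ m' := by
      rw [show algebraMap (B n) (F n) (Polynomial.C (g₀ ^ m')) = θ n (g₀ ^ m') from rfl,
        map_pow]
    have e1 : algebraMap (B n) (F n) (tw g₀ b' D * Polynomial.X ^ (m + m'))
        = (Vg g₀ ^ m' * z) * TT n ^ D * TT n ^ (m + m') := by
      rw [map_mul, map_pow, TT_def, EV_tw g₀ b' le_rfl, hb'']
    have e2 : algebraMap (B n) (F n) (b * Polynomial.C (g₀ ^ m') * Polynomial.X ^ D)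
        = (TT n ^ m * z) * θ n g₀ ^ m' * TT n ^ D := by
      rw [map_mul, map_mul, hC, map_pow, TT_def, hb]
    rw [e1, e2, ← TT_mul_Vg g₀]
    ring
  have hdiv : ∀ i, i < m → ∃ e : Rx n, b.coeff i = e * g₀ ^ (m - i) := by
    intro i hi
    have hco := congrArg (fun p' => Polynomial.coeff p' (D + i)) key
    rw [Polynomial.coeff_mul_X_pow', Polynomial.coeff_mul_X_pow',
      if_pos (Nat.le_add_right D i), Nat.add_sub_cancel_left, Polynomial.coeff_mul_C] at hco
    by_cases hcase : m + m' ≤ D + i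
    · rw [if_pos hcase, tw_coeff_le g₀ b' (by omega : D + i - (m + m') ≤ D),
        (by omega : D - (D + i - (m + m')) = m + m' - i),
        (by omega : m + m' - i = (m - i) + m'), pow_add, ← mul_assoc] at hco
      exact ⟨b'.coeff (m + m' - i), by
        rw [(by omega : m + m' - i = (m - i) + m')]
        exact (mul_right_cancel₀ (pow_ne_zero _ hg) hco).symm⟩
    · rw [if_neg hcase] at hco
      refine ⟨0, ?_⟩
      rw [zero_mul]
      rcases mul_eq_zero.mp hco.symm with h' | h'
      · exact h'
      · exact absurd h' (pow_ne_zero _ hg)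
  set M := max (b.natDegree + 1) m with hMdef
  set w : ℕ → Rx n := fun i => if h : i < m then (hdiv i h).choose else b.coeff i with hwdef
  have hw : ∀ i, i < m → b.coeff i = w i * g₀ ^ (m - i) := by
    intro i hi
    rw [hwdef]
    simp only [dif_pos hi]
    exact (hdiv i hi).choose_spec
  set pfin : P n := ∑ i ∈ Finset.range M, ξ n (w i) *
      (if i < m then X (Sum.inl 1) ^ (m - i) else X (Sum.inl 0) ^ (i - m)) with hpfin
  refine ⟨Ideal.Quotient.mk _ pfin, ?_⟩
  rw [halg]
  refine mul_right_cancel₀ (pow_ne_zero m (TT_ne_zero (n := n))) ?_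
  have hrhs : z * TT n ^ m = algebraMap (B n) (F n) b := by rw [hb]; ring
  rw [hrhs, psi_mk, hpfin, map_sum, Finset.sum_mul]
  have hbexp : algebraMap (B n) (F n) b = ∑ i ∈ Finset.range M, θ n (b.coeff i) * TT n ^ i := by
    rw [← ET_apply, Polynomial.eval₂_eq_sum_range' (θ n) (by omega : b.natDegree < M)]
  rw [hbexp]
  apply Finset.sum_congr rfl
  intro i hi
  rw [map_mul, phi_ξ, apply_ite (φ g₀), map_pow, map_pow, phi_u, phi_v]
  by_cases him : i < m
  · rw [if_pos him]
    have hTsplit : TT n ^ m = TT n ^ (m - i) * TT n ^ i := by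
      rw [← pow_add, Nat.sub_add_cancel (le_of_lt him)]
    rw [hTsplit]
    calc θ n (w i) * Vg g₀ ^ (m - i) * (TT n ^ (m - i) * TT n ^ i)
        = θ n (w i) * (TT n * Vg g₀) ^ (m - i) * TT n ^ i := by ring
      _ = θ n (w i) * θ n g₀ ^ (m - i) * TT n ^ i := by rw [TT_mul_Vg]
      _ = θ n (w i * g₀ ^ (m - i)) * TT n ^ i := by rw [map_mul, map_pow]
      _ = θ n (b.coeff i) * TT n ^ i := by rw [← hw i him]
  · rw [if_neg him]
    have hwi : w i = b.coeff i := by rw [hwdef]; simp only [dif_neg him]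
    rw [hwi, mul_assoc, ← pow_add, Nat.sub_add_cancel (le_of_not_gt him)]

end HyperNormalAux

theorem HyperNormalAux.main' (n : ℕ) (g₀ : HyperNormalAux.Rx n) (hg : g₀ ≠ 0)
    (J : Ideal (HyperNormalAux.P n)) (hJ : J = HyperNormalAux.I g₀) :
    IsDomain (HyperNormalAux.P n ⧸ J) ∧ IsIntegrallyClosed (HyperNormalAux.P n ⧸ J) := by
  subst hJ
  exact HyperNormalAux.main n g₀ hg

/-- **The hypersurface ring `A = ℂ[u,v,x₁,…,xₙ]/(uv - f₁^{a₁} ⋯ f_t^{a_t})` is a normal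
integral domain**, where the `fᵢ ∈ ℂ[x₁,…,xₙ]` are irreducible and pairwise coprime and
each `aᵢ ≥ 1`. -/
theorem hyperRing_isDomain_isIntegrallyClosed (n t : ℕ)
    (f : Fin t → MvPolynomial (Fin n) ℂ) (hirr : ∀ i, Irreducible (f i))
    (hcop : ∀ i j, i ≠ j → IsRelPrime (f i) (f j)) (a : Fin t → ℕ) (ha : ∀ i, 1 ≤ a i) :
    IsDomain (HyperRing n t f a) ∧ IsIntegrallyClosed (HyperRing n t f a) := by
  have hg₀ : (∏ i, f i ^ a i) ≠ 0 :=
    Finset.prod_ne_zero_iff.mpr fun i _ => pow_ne_zero _ (hirr i).ne_zero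
  have hprod : (∏ i, (rename (Sum.inr : Fin n → Fin 2 ⊕ Fin n)) (f i) ^ a i)
      = HyperNormalAux.ξ n (∏ i, f i ^ a i) := by
    rw [map_prod]
    exact Finset.prod_congr rfl fun i _ => by rw [map_pow]; rfl
  have hideal : hyperIdeal n t f a = HyperNormalAux.I (∏ i, f i ^ a i) := by
    rw [hyperIdeal, HyperNormalAux.I, hprod]
  exact HyperNormalAux.main' n (∏ i, f i ^ a i) hg₀ (hyperIdeal n t f a) hideal
end

section
/- Let A = ℂ[u,v,x_1,...,x_n]/(uv − f_1^{a_1}···f_t^{a_t}) with f_i non-constant, irreducible and pairwise coprime polynomials, a_i ≥ 1. Then the group of units of A is exactly ℂ^×. -/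
universe u v

open MvPolynomial

namespace HyperAux

open LaurentPolynomial

/-- Units of a multivariate polynomial ring over `ℂ` are the nonzero constants. -/
lemma mv_isUnit {n : ℕ} {p : MvPolynomial (Fin n) ℂ} (hp : IsUnit p) :
    ∃ c : ℂ, c ≠ 0 ∧ p = MvPolynomial.C c := by
  induction n with
  | zero =>
      refine ⟨p.coeff 0, ?_, eq_C_of_isEmpty p⟩
      intro hc
      have : p = 0 := by rw [eq_C_of_isEmpty p, hc, map_zero]
      exact hp.ne_zero this
  | succ m ih =>
      have h1 : IsUnit (finSuccEquiv ℂ m p) := hp.map (finSuccEquiv ℂ m)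
      obtain ⟨r, hr, hrp⟩ := Polynomial.isUnit_iff.mp h1
      obtain ⟨c, hc, rfl⟩ := ih hr
      refine ⟨c, hc, ?_⟩
      have h2 := congrArg (finSuccEquiv ℂ m).symm hrp
      rw [(finSuccEquiv ℂ m).symm_apply_apply] at h2
      have h3 := RingHom.congr_fun (finSuccEquiv_comp_C_eq_C (R := ℂ) m) c
      simp only [RingHom.coe_comp, RingHom.coe_coe, Function.comp_apply] at h3
      rw [← h2, ← h3]

/-- Units of the Laurent polynomial ring over a UFD `R` have the form `C r * T k`. -/
lemma laurent_unit {R : Type} [CommRing R] [IsDomain R] [UniqueFactorizationMonoid R]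
    {w : LaurentPolynomial R} (hw : IsUnit w) :
    ∃ (r : R) (k : ℤ), IsUnit r ∧ w = LaurentPolynomial.C r * T k := by
  obtain ⟨z, hz⟩ := hw.exists_right_inv
  obtain ⟨nn, f', hf⟩ := exists_T_pow w
  obtain ⟨mm, g', hg⟩ := exists_T_pow z
  have key : f' * g' = Polynomial.X ^ (nn + mm) := by
    apply Polynomial.toLaurent_injective
    rw [map_mul, hf, hg, Polynomial.toLaurent_X_pow]
    rw [mul_mul_mul_comm, hz, one_mul, ← T_add]
    push_cast
    ring_nf
  have hdvd : f' ∣ Polynomial.X ^ (nn + mm) := ⟨g', key.symm⟩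
  obtain ⟨i, _, hassoc⟩ := (dvd_prime_pow Polynomial.prime_X (nn + mm)).mp hdvd
  obtain ⟨uu, huu⟩ := hassoc.symm
  obtain ⟨r, hr, hru⟩ := Polynomial.isUnit_iff.mp uu.isUnit
  refine ⟨r, (i : ℤ) - nn, hr, ?_⟩
  have hw' : w = Polynomial.toLaurent f' * T (-(nn : ℤ)) := by
    rw [hf, mul_T_assoc, add_neg_cancel, T_zero, mul_one]
  rw [hw', ← huu, ← hru, map_mul, Polynomial.toLaurent_X_pow, Polynomial.toLaurent_C]
  rw [mul_comm (T (i : ℤ)) _, mul_T_assoc, sub_eq_add_neg]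

section Main

variable (n t : ℕ) (f : Fin t → MvPolynomial (Fin n) ℂ) (a : Fin t → ℕ)

/-- `F = ∏ fᵢ^{aᵢ}`. -/
noncomputable def Fbig : MvPolynomial (Fin n) ℂ := ∏ i, f i ^ a i

/-- `u` as a polynomial. -/
noncomputable def U : MvPolynomial (Fin 2 ⊕ Fin n) ℂ := X (Sum.inl 0)

/-- `v` as a polynomial. -/
noncomputable def V : MvPolynomial (Fin 2 ⊕ Fin n) ℂ := X (Sum.inl 1)

lemma rename_Fbig :
    rename (Sum.inr : Fin n → Fin 2 ⊕ Fin n) (Fbig n t f a)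
      = ∏ i, (rename Sum.inr (f i)) ^ a i := by
  rw [Fbig, map_prod]
  simp [map_pow]

lemma gen_mem :
    U n * V n - rename (Sum.inr : Fin n → Fin 2 ⊕ Fin n) (Fbig n t f a)
      ∈ hyperIdeal n t f a := by
  rw [rename_Fbig]
  exact Ideal.subset_span rfl

/-- The normal-form monomial `u^k` (for `k ≥ 0`) or `v^{-k}` (for `k < 0`). -/
noncomputable def mon (k : ℤ) : MvPolynomial (Fin 2 ⊕ Fin n) ℂ :=
  if 0 ≤ k then U n ^ k.toNat else V n ^ (-k).toNat

/-- A single normal-form term `r(x) · mon k`. -/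
noncomputable def Nfun (k : ℤ) (r : MvPolynomial (Fin n) ℂ) :
    MvPolynomial (Fin 2 ⊕ Fin n) ℂ :=
  rename Sum.inr r * mon n k

/-- The normal form associated to a finitely supported family of coefficients. -/
noncomputable def NF (h : ℤ →₀ MvPolynomial (Fin n) ℂ) :
    MvPolynomial (Fin 2 ⊕ Fin n) ℂ :=
  h.sum (Nfun n)

lemma Nfun_zero (k : ℤ) : Nfun n k 0 = 0 := by simp [Nfun]

lemma Nfun_add (k : ℤ) (r s : MvPolynomial (Fin n) ℂ) :
    Nfun n k (r + s) = Nfun n k r + Nfun n k s := by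
  simp [Nfun, map_add, add_mul]

lemma NF_single (k : ℤ) (r : MvPolynomial (Fin n) ℂ) :
    NF n (Finsupp.single k r) = Nfun n k r := by
  rw [NF]
  exact Finsupp.sum_single_index (Nfun_zero n k)

/-- The weight by which multiplication by `u` multiplies the coefficient landing
in position `k`. -/
noncomputable def wU (k : ℤ) : MvPolynomial (Fin n) ℂ :=
  if k ≤ 0 then Fbig n t f a else 1

/-- The weight by which multiplication by `v` multiplies the coefficient landing
in position `k`. -/
noncomputable def wV (k : ℤ) : MvPolynomial (Fin n) ℂ :=
  if 0 ≤ k then Fbig n t f a else 1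

lemma Nfun_mul_U (k : ℤ) (r : MvPolynomial (Fin n) ℂ) :
    Nfun n k r * U n - Nfun n (k + 1) (r * wU n t f a (k + 1)) ∈ hyperIdeal n t f a := by
  by_cases hk : 0 ≤ k
  · have h1 : wU n t f a (k + 1) = 1 := by rw [wU, if_neg (by omega)]
    have h2 : mon n k = U n ^ k.toNat := by rw [mon, if_pos hk]
    have h3 : mon n (k + 1) = U n ^ (k.toNat + 1) := by
      have e : (k + 1).toNat = k.toNat + 1 := by omega
      rw [mon, if_pos (by omega), e]
    have : Nfun n k r * U n = Nfun n (k + 1) (r * wU n t f a (k + 1)) := by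
      rw [Nfun, Nfun, h1, h2, h3, mul_one, pow_succ]
      ring
    rw [this, sub_self]
    exact zero_mem _
  · obtain ⟨m, hm⟩ : ∃ m, (-k).toNat = m + 1 := ⟨(-k).toNat - 1, by omega⟩
    have h1 : wU n t f a (k + 1) = Fbig n t f a := by rw [wU, if_pos (by omega)]
    have h2 : mon n k = V n ^ (m + 1) := by rw [mon, if_neg hk, hm]
    have h3 : mon n (k + 1) = V n ^ m := by
      rw [mon]
      by_cases hk1 : 0 ≤ k + 1
      · have hk0 : (k + 1).toNat = 0 := by omega
        have hm0 : m = 0 := by omega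
        rw [if_pos hk1, hk0, hm0, pow_zero, pow_zero]
      · have e : (-(k + 1)).toNat = m := by omega
        rw [if_neg hk1, e]
    have key : Nfun n k r * U n - Nfun n (k + 1) (r * wU n t f a (k + 1))
        = (rename Sum.inr r * V n ^ m)
          * (U n * V n - rename (Sum.inr : Fin n → Fin 2 ⊕ Fin n) (Fbig n t f a)) := by
      rw [Nfun, Nfun, h1, h2, h3, map_mul, pow_succ]
      ring
    rw [key]
    exact Ideal.mul_mem_left _ _ (gen_mem n t f a)

lemma Nfun_mul_V (k : ℤ) (r : MvPolynomial (Fin n) ℂ) :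
    Nfun n k r * V n - Nfun n (k - 1) (r * wV n t f a (k - 1)) ∈ hyperIdeal n t f a := by
  by_cases hk : 1 ≤ k
  · obtain ⟨m, hm⟩ : ∃ m, k.toNat = m + 1 := ⟨k.toNat - 1, by omega⟩
    have h1 : wV n t f a (k - 1) = Fbig n t f a := by rw [wV, if_pos (by omega)]
    have h2 : mon n k = U n ^ (m + 1) := by rw [mon, if_pos (by omega), hm]
    have h3 : mon n (k - 1) = U n ^ m := by
      have e : (k - 1).toNat = m := by omega
      rw [mon, if_pos (by omega), e]
    have key : Nfun n k r * V n - Nfun n (k - 1) (r * wV n t f a (k - 1))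
        = (rename Sum.inr r * U n ^ m)
          * (U n * V n - rename (Sum.inr : Fin n → Fin 2 ⊕ Fin n) (Fbig n t f a)) := by
      rw [Nfun, Nfun, h1, h2, h3, map_mul, pow_succ]
      ring
    rw [key]
    exact Ideal.mul_mem_left _ _ (gen_mem n t f a)
  · have h1 : wV n t f a (k - 1) = 1 := by rw [wV, if_neg (by omega)]
    have h2 : mon n k = V n ^ (-k).toNat := by
      by_cases h0 : k = 0
      · subst h0
        rw [mon, if_pos le_rfl]
        simp
      · rw [mon, if_neg (by omega)]
    have h3 : mon n (k - 1) = V n ^ ((-k).toNat + 1) := by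
      have e : (-(k - 1)).toNat = (-k).toNat + 1 := by omega
      rw [mon, if_neg (by omega), e]
    have : Nfun n k r * V n = Nfun n (k - 1) (r * wV n t f a (k - 1)) := by
      rw [Nfun, Nfun, h1, h2, h3, mul_one, pow_succ]
      ring
    rw [this, sub_self]
    exact zero_mem _

lemma Nfun_mul_X (k : ℤ) (r : MvPolynomial (Fin n) ℂ) (i : Fin n) :
    Nfun n k r * X (Sum.inr i) - Nfun n k (r * X i) ∈ hyperIdeal n t f a := by
  have : Nfun n k r * X (Sum.inr i) = Nfun n k (r * X i) := by
    rw [Nfun, Nfun, map_mul, rename_X]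
    ring
  rw [this, sub_self]
  exact zero_mem _

/-- Multiplying a normal form by a variable keeps it (mod the ideal) in normal form. -/
lemma NF_step (h : ℤ →₀ MvPolynomial (Fin n) ℂ) (s : Fin 2 ⊕ Fin n) (sh : ℤ → ℤ)
    (wt : ℤ → MvPolynomial (Fin n) ℂ → MvPolynomial (Fin n) ℂ)
    (hwt0 : ∀ k, wt k 0 = 0)
    (hwtadd : ∀ k r₁ r₂, wt k (r₁ + r₂) = wt k r₁ + wt k r₂)
    (hkey : ∀ k r, Nfun n k r * X s - Nfun n (sh k) (wt k r) ∈ hyperIdeal n t f a) :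
    ∃ h' : ℤ →₀ MvPolynomial (Fin n) ℂ, NF n h * X s - NF n h' ∈ hyperIdeal n t f a := by
  refine ⟨h.sum fun k r => Finsupp.single (sh k) (wt k r), ?_⟩
  have e1 : NF n h * X s = h.sum fun k r => Nfun n k r * X s := by
    rw [NF, Finsupp.sum_mul]
  have e2 : NF n (h.sum fun k r => Finsupp.single (sh k) (wt k r))
      = h.sum fun k r => Nfun n (sh k) (wt k r) := by
    rw [NF, Finsupp.sum_sum_index (fun k => Nfun_zero n k) (fun k => Nfun_add n k)]
    refine Finsupp.sum_congr fun k _ => ?_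
    rw [Finsupp.sum_single_index (Nfun_zero n _)]
  rw [e1, e2, ← Finsupp.sum_sub]
  exact Ideal.sum_mem _ fun k _ => hkey k (h k)

/-- Every polynomial is congruent to a normal form modulo the hypersurface ideal. -/
lemma reduce (p : MvPolynomial (Fin 2 ⊕ Fin n) ℂ) :
    ∃ h : ℤ →₀ MvPolynomial (Fin n) ℂ, p - NF n h ∈ hyperIdeal n t f a := by
  induction p using MvPolynomial.induction_on with
  | C c =>
      refine ⟨Finsupp.single 0 (MvPolynomial.C c), ?_⟩
      have : NF n (Finsupp.single 0 (MvPolynomial.C c)) = MvPolynomial.C c := by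
        rw [NF_single, Nfun, mon, if_pos le_rfl, Int.toNat_zero, pow_zero, mul_one, rename_C]
      rw [this, sub_self]
      exact zero_mem _
  | add p q hp hq =>
      obtain ⟨h₁, hh₁⟩ := hp
      obtain ⟨h₂, hh₂⟩ := hq
      refine ⟨h₁ + h₂, ?_⟩
      have : NF n (h₁ + h₂) = NF n h₁ + NF n h₂ := by
        rw [NF, Finsupp.sum_add_index' (Nfun_zero n) (Nfun_add n)]
        rfl
      rw [this]
      have e : p + q - (NF n h₁ + NF n h₂) = (p - NF n h₁) + (q - NF n h₂) := by ring
      rw [e]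
      exact Ideal.add_mem _ hh₁ hh₂
  | mul_X p s hp =>
      obtain ⟨h, hh⟩ := hp
      have main : ∃ h' : ℤ →₀ MvPolynomial (Fin n) ℂ,
          NF n h * X s - NF n h' ∈ hyperIdeal n t f a := by
        rcases s with j | i
        · fin_cases j
          · exact NF_step n t f a h _ (fun k => k + 1)
              (fun k r => r * wU n t f a (k + 1)) (fun k => by simp)
              (fun k r₁ r₂ => by ring) (fun k r => Nfun_mul_U n t f a k r)
          · exact NF_step n t f a h _ (fun k => k - 1)
              (fun k r => r * wV n t f a (k - 1)) (fun k => by simp)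
              (fun k r₁ r₂ => by ring) (fun k r => Nfun_mul_V n t f a k r)
        · exact NF_step n t f a h _ (fun k => k)
            (fun k r => r * X i) (fun k => by simp)
            (fun k r₁ r₂ => by ring) (fun k r => Nfun_mul_X n t f a k r i)
      obtain ⟨h', hh'⟩ := main
      refine ⟨h', ?_⟩
      have e : p * X s - NF n h' = (p - NF n h) * X s + (NF n h * X s - NF n h') := by ring
      rw [e]
      exact Ideal.add_mem _ (Ideal.mul_mem_right _ _ hh) hh'

/-- The map to Laurent polynomials: `u ↦ T`, `v ↦ F·T⁻¹`, `xᵢ ↦ xᵢ`. -/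
noncomputable def Φ : Fin 2 ⊕ Fin n → LaurentPolynomial (MvPolynomial (Fin n) ℂ) :=
  Sum.elim
    (fun j : Fin 2 => if j = 0 then T 1 else LaurentPolynomial.C (Fbig n t f a) * T (-1))
    (fun i => LaurentPolynomial.C (X i))

noncomputable def φ : MvPolynomial (Fin 2 ⊕ Fin n) ℂ
    →ₐ[ℂ] LaurentPolynomial (MvPolynomial (Fin n) ℂ) :=
  aeval (Φ n t f a)

lemma φ_U : φ n t f a (U n) = T 1 := by
  rw [φ, U, aeval_X, Φ, Sum.elim_inl, if_pos rfl]

lemma φ_V : φ n t f a (V n) = LaurentPolynomial.C (Fbig n t f a) * T (-1) := by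
  rw [φ, V, aeval_X, Φ, Sum.elim_inl, if_neg (by decide)]

lemma φ_rename (r : MvPolynomial (Fin n) ℂ) :
    φ n t f a (rename Sum.inr r) = LaurentPolynomial.C r := by
  rw [φ, aeval_rename]
  have : (aeval ((Φ n t f a) ∘ Sum.inr) :
        MvPolynomial (Fin n) ℂ →ₐ[ℂ] LaurentPolynomial (MvPolynomial (Fin n) ℂ))
      = AddMonoidAlgebra.singleZeroAlgHom := by
    apply MvPolynomial.algHom_ext
    intro i
    simp only [aeval_X, Function.comp_apply, Φ, Sum.elim_inr]
    rw [AddMonoidAlgebra.singleZeroAlgHom_apply, LaurentPolynomial.single_eq_C]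
  rw [this, AddMonoidAlgebra.singleZeroAlgHom_apply, LaurentPolynomial.single_eq_C]

lemma φ_ideal : ∀ p ∈ hyperIdeal n t f a, φ n t f a p = 0 := by
  intro p hp
  rw [hyperIdeal, ← rename_Fbig] at hp
  rw [Ideal.mem_span_singleton'] at hp
  obtain ⟨q, rfl⟩ := hp
  rw [map_mul]
  have : φ n t f a (U n * V n - rename Sum.inr (Fbig n t f a)) = 0 := by
    rw [map_sub, map_mul, φ_U, φ_V, φ_rename, mul_left_comm, ← T_add]
    norm_num
  rw [U, V] at this
  rw [this, mul_zero]

/-- Weight showing up in the image of a normal-form monomial. -/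
noncomputable def wco (k : ℤ) : MvPolynomial (Fin n) ℂ :=
  if 0 ≤ k then 1 else Fbig n t f a ^ (-k).toNat

lemma φ_mon (k : ℤ) :
    φ n t f a (mon n k) = LaurentPolynomial.C (wco n t f a k) * T k := by
  by_cases hk : 0 ≤ k
  · rw [mon, if_pos hk, wco, if_pos hk, map_pow, φ_U, T_pow, map_one, one_mul, mul_one,
      Int.toNat_of_nonneg hk]
  · rw [mon, if_neg hk, wco, if_neg hk, map_pow, φ_V, mul_pow, ← map_pow, T_pow]
    congr 2
    omega

lemma φ_NF (h : ℤ →₀ MvPolynomial (Fin n) ℂ) :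
    φ n t f a (NF n h)
      = h.sum fun k r => AddMonoidAlgebra.single k (r * wco n t f a k) := by
  rw [NF, map_finsuppSum]
  refine Finsupp.sum_congr fun k _ => ?_
  rw [Nfun, map_mul, φ_rename, φ_mon, LaurentPolynomial.single_eq_C_mul_T, map_mul]
  ring

lemma Fbig_ne_zero (hirr : ∀ i, Irreducible (f i)) : Fbig n t f a ≠ 0 := by
  rw [Fbig]
  rw [Finset.prod_ne_zero_iff]
  exact fun i _ => pow_ne_zero _ (hirr i).ne_zero

lemma ker_NF (hF : Fbig n t f a ≠ 0) (h : ℤ →₀ MvPolynomial (Fin n) ℂ)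
    (h0 : φ n t f a (NF n h) = 0) : h = 0 := by
  rw [φ_NF] at h0
  refine Finsupp.ext fun k₀ => ?_
  have := congrArg (fun z : LaurentPolynomial (MvPolynomial (Fin n) ℂ) =>
    z.coeff k₀) h0
  rw [Finsupp.sum, AddMonoidAlgebra.coeff_sum, Finsupp.finset_sum_apply] at this
  change (h.sum fun k r => (Finsupp.single k (r * wco n t f a k)) k₀) = 0 at this
  have e : (h.sum fun k r => (Finsupp.single k (r * wco n t f a k)) k₀)
      = h k₀ * wco n t f a k₀ := by
    rw [Finsupp.sum]
    rw [Finset.sum_eq_single k₀]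
    · rw [Finsupp.single_eq_same]
    · intro b _ hb
      rw [Finsupp.single_eq_of_ne hb.symm]
    · intro hk
      rw [Finsupp.notMem_support_iff.mp hk, zero_mul, Finsupp.single_eq_same]
  rw [e] at this
  have hw : wco n t f a k₀ ≠ 0 := by
    rw [wco]
    split
    · exact one_ne_zero
    · exact pow_ne_zero _ hF
  have : h k₀ = 0 := by
    rcases mul_eq_zero.mp this with h' | h'
    · exact h'
    · exact absurd h' hw
  exact this

lemma ker_sub (hF : Fbig n t f a ≠ 0) (p : MvPolynomial (Fin 2 ⊕ Fin n) ℂ)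
    (hp : φ n t f a p = 0) : p ∈ hyperIdeal n t f a := by
  obtain ⟨h, hh⟩ := reduce n t f a p
  have h1 : φ n t f a (NF n h) = 0 := by
    have := φ_ideal n t f a _ hh
    rw [map_sub, hp, zero_sub, neg_eq_zero] at this
    exact this
  have h2 := ker_NF n t f a hF h h1
  rw [h2] at hh
  have : NF n (0 : ℤ →₀ MvPolynomial (Fin n) ℂ) = 0 := by
    rw [NF, Finsupp.sum_zero_index]
  rw [this, sub_zero] at hh
  exact hh

lemma φ_C (c : ℂ) :
    φ n t f a (MvPolynomial.C c) = LaurentPolynomial.C (MvPolynomial.C c) := by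
  rw [← rename_C (Sum.inr : Fin n → Fin 2 ⊕ Fin n) c, φ_rename]

/-- Evaluation maps `ℂ[u,v,x] → ℂ[X]` sending `xᵢ ↦ x₀ᵢ`, `u ↦ w 0`, `v ↦ w 1`. -/
noncomputable def ψmap (x₀ : Fin n → ℂ) (w : Fin 2 → Polynomial ℂ) :
    MvPolynomial (Fin 2 ⊕ Fin n) ℂ →ₐ[ℂ] Polynomial ℂ :=
  aeval (Sum.elim w fun i => Polynomial.C (x₀ i))

lemma ψmap_U (x₀ : Fin n → ℂ) (w : Fin 2 → Polynomial ℂ) :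
    ψmap n x₀ w (U n) = w 0 := by
  rw [ψmap, U, aeval_X, Sum.elim_inl]

lemma ψmap_V (x₀ : Fin n → ℂ) (w : Fin 2 → Polynomial ℂ) :
    ψmap n x₀ w (V n) = w 1 := by
  rw [ψmap, V, aeval_X, Sum.elim_inl]

lemma ψmap_C (x₀ : Fin n → ℂ) (w : Fin 2 → Polynomial ℂ) (c : ℂ) :
    ψmap n x₀ w (MvPolynomial.C c) = Polynomial.C c := by
  rw [ψmap, aeval_C, Polynomial.algebraMap_eq]

lemma ψmap_rename (x₀ : Fin n → ℂ) (w : Fin 2 → Polynomial ℂ)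
    (r : MvPolynomial (Fin n) ℂ) :
    ψmap n x₀ w (rename Sum.inr r) = Polynomial.C (aeval x₀ r) := by
  rw [ψmap, aeval_rename]
  have h : (aeval (Sum.elim w (fun i => Polynomial.C (x₀ i)) ∘ Sum.inr) :
      MvPolynomial (Fin n) ℂ →ₐ[ℂ] Polynomial ℂ)
      = Polynomial.CAlgHom.comp (aeval x₀) := by
    apply MvPolynomial.algHom_ext
    intro i
    simp [Polynomial.CAlgHom]
  rw [h]
  simp [Polynomial.CAlgHom]

lemma ψmap_ideal (x₀ : Fin n → ℂ) (w : Fin 2 → Polynomial ℂ)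
    (hw : w 0 * w 1 = Polynomial.C (aeval x₀ (Fbig n t f a))) :
    ∀ p ∈ hyperIdeal n t f a, ψmap n x₀ w p = 0 := by
  intro p hp
  rw [hyperIdeal, ← rename_Fbig, Ideal.mem_span_singleton'] at hp
  obtain ⟨q, rfl⟩ := hp
  rw [map_mul]
  have h : ψmap n x₀ w (U n * V n - rename Sum.inr (Fbig n t f a)) = 0 := by
    rw [map_sub, map_mul, ψmap_U, ψmap_V, ψmap_rename, hw, sub_self]
  rw [U, V] at h
  rw [h, mul_zero]

lemma exists_root (htpos : 0 < t) (hirr : ∀ i, Irreducible (f i)) (ha : ∀ i, 1 ≤ a i) :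
    ∃ x₀ : Fin n → ℂ, aeval x₀ (Fbig n t f a) = 0 := by
  set i₀ : Fin t := ⟨0, htpos⟩
  have hnu : ¬ IsUnit (f i₀) := (hirr i₀).not_isUnit
  have hne : Ideal.span {f i₀} ≠ ⊤ :=
    fun htop => hnu (Ideal.span_singleton_eq_top.mp htop)
  obtain ⟨m, hm, hle⟩ := Ideal.exists_le_maximal _ hne
  obtain ⟨x₀, rfl⟩ := (MvPolynomial.isMaximal_iff_eq_vanishingIdeal_singleton (I := m)).mp hm
  refine ⟨x₀, ?_⟩
  have hf0 : eval x₀ (f i₀) = 0 := by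
    have hmem := hle (Ideal.mem_span_singleton_self _)
    rw [MvPolynomial.mem_vanishingIdeal_iff] at hmem
    exact hmem x₀ rfl
  have he : aeval x₀ (Fbig n t f a) = eval x₀ (Fbig n t f a) :=
    RingHom.congr_fun (coe_aeval_eq_eval x₀) _
  rw [he, Fbig, map_prod]
  refine Finset.prod_eq_zero (Finset.mem_univ i₀) ?_
  rw [map_pow, hf0]
  exact zero_pow (by have := ha i₀; omega)

end Main

end HyperAux

/-- **Units of the hypersurface ring.**
For `A = ℂ[u,v,x₁,…,xₙ]/(uv - f₁^{a₁} ⋯ f_t^{a_t})` with the `fᵢ` non-constant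
irreducible pairwise coprime polynomials and `aᵢ ≥ 1`, the group of units of `A` is
exactly `ℂ^×`: an element of `A` is a unit if and only if it is a nonzero constant. -/
theorem hyperRing_units (n t : ℕ) (htpos : 0 < t) (f : Fin t → MvPolynomial (Fin n) ℂ)
    (hirr : ∀ i, Irreducible (f i)) (hcop : ∀ i j, i ≠ j → IsRelPrime (f i) (f j))
    (a : Fin t → ℕ) (ha : ∀ i, 1 ≤ a i) :
    ∀ y : HyperRing n t f a, IsUnit y ↔
      ∃ c : ℂ, c ≠ 0 ∧ y = algebraMap ℂ (HyperRing n t f a) c := by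
  classical
  intro y
  constructor
  · intro hy
    have hF : HyperAux.Fbig n t f a ≠ 0 := HyperAux.Fbig_ne_zero n t f a hirr
    obtain ⟨x₀, hx₀⟩ := HyperAux.exists_root n t f a htpos hirr ha
    -- the three quotient maps
    let φb : HyperRing n t f a →+* LaurentPolynomial (MvPolynomial (Fin n) ℂ) :=
      Ideal.Quotient.lift _ (HyperAux.φ n t f a).toRingHom
        (fun p hp => HyperAux.φ_ideal n t f a p hp)
    let w1 : Fin 2 → Polynomial ℂ := fun j => if j = 0 then 0 else Polynomial.X
    let w2 : Fin 2 → Polynomial ℂ := fun j => if j = 0 then Polynomial.X else 0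
    have hw1 : w1 0 * w1 1 = Polynomial.C (aeval x₀ (HyperAux.Fbig n t f a)) := by
      simp [w1, hx₀]
    have hw2 : w2 0 * w2 1 = Polynomial.C (aeval x₀ (HyperAux.Fbig n t f a)) := by
      simp [w2, hx₀]
    let ψb : HyperRing n t f a →+* Polynomial ℂ :=
      Ideal.Quotient.lift _ (HyperAux.ψmap n x₀ w1).toRingHom
        (fun p hp => HyperAux.ψmap_ideal n t f a x₀ w1 hw1 p hp)
    obtain ⟨p, rfl⟩ := Ideal.Quotient.mk_surjective y
    have hφp : IsUnit (HyperAux.φ n t f a p) := by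
      have h := hy.map φb
      rwa [Ideal.Quotient.lift_mk] at h
    obtain ⟨r, k, hr, hwk⟩ := HyperAux.laurent_unit hφp
    obtain ⟨c, hc, rfl⟩ := HyperAux.mv_isUnit hr
    have halg : ∀ c' : ℂ, algebraMap ℂ (HyperRing n t f a) c'
        = Ideal.Quotient.mk (hyperIdeal n t f a) (MvPolynomial.C c') := fun _ => rfl
    rcases lt_trichotomy k 0 with hk | hk | hk
    · exfalso
      set m := (-k).toNat with hmdef
      have hm1 : 1 ≤ m := by omega
      have h0 : HyperAux.φ n t f a (p * HyperAux.U n ^ m - MvPolynomial.C c) = 0 := by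
        rw [map_sub, map_mul, map_pow, HyperAux.φ_U, HyperAux.φ_C, hwk,
          LaurentPolynomial.T_pow, LaurentPolynomial.mul_T_assoc]
        have hkm : k + (m : ℤ) * 1 = 0 := by omega
        rw [hkm, LaurentPolynomial.T_zero, mul_one, sub_self]
      have hmem := HyperAux.ker_sub n t f a hF _ h0
      have heq : HyperAux.ψmap n x₀ w2 (p * HyperAux.U n ^ m)
          = HyperAux.ψmap n x₀ w2 (MvPolynomial.C c) := by
        rw [← sub_eq_zero, ← map_sub]
        exact HyperAux.ψmap_ideal n t f a x₀ w2 hw2 _ hmem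
      rw [map_mul, map_pow, HyperAux.ψmap_U, HyperAux.ψmap_C] at heq
      have hX : w2 0 = Polynomial.X := rfl
      rw [hX] at heq
      have := congrArg (Polynomial.eval 0) heq
      rw [Polynomial.eval_mul, Polynomial.eval_pow, Polynomial.eval_X, Polynomial.eval_C,
        zero_pow (by omega : m ≠ 0), mul_zero] at this
      exact hc this.symm
    · subst hk
      refine ⟨c, hc, ?_⟩
      have h0 : HyperAux.φ n t f a (p - MvPolynomial.C c) = 0 := by
        rw [map_sub, HyperAux.φ_C, hwk, LaurentPolynomial.T_zero, mul_one, sub_self]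
      have hmem := HyperAux.ker_sub n t f a hF _ h0
      rw [halg c]
      exact Ideal.Quotient.eq.mpr hmem
    · exfalso
      set m := k.toNat with hmdef
      have hm1 : 1 ≤ m := by omega
      have h0 : HyperAux.φ n t f a
          (p - MvPolynomial.C c * HyperAux.U n ^ m) = 0 := by
        rw [map_sub, map_mul, map_pow, HyperAux.φ_U, HyperAux.φ_C, hwk,
          LaurentPolynomial.T_pow]
        have hkm : (m : ℤ) * 1 = k := by omega
        rw [hkm, sub_self]
      have hmem := HyperAux.ker_sub n t f a hF _ h0
      have heq : HyperAux.ψmap n x₀ w1 p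
          = HyperAux.ψmap n x₀ w1 (MvPolynomial.C c * HyperAux.U n ^ m) := by
        rw [← sub_eq_zero, ← map_sub]
        exact HyperAux.ψmap_ideal n t f a x₀ w1 hw1 _ hmem
      rw [map_mul, map_pow, HyperAux.ψmap_U, HyperAux.ψmap_C] at heq
      have h00 : w1 0 = 0 := rfl
      rw [h00, zero_pow (by omega : m ≠ 0), mul_zero] at heq
      have hunit : IsUnit (ψb (Ideal.Quotient.mk (hyperIdeal n t f a) p)) := hy.map ψb
      rw [Ideal.Quotient.lift_mk] at hunit
      have hunit' : IsUnit (HyperAux.ψmap n x₀ w1 p) := hunit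
      rw [heq] at hunit'
      exact hunit'.ne_zero rfl
  · rintro ⟨c, hc, rfl⟩
    exact (isUnit_iff_ne_zero.mpr hc).map (algebraMap ℂ (HyperRing n t f a))
end

section
/- Let A = ℂ[u,v,x_1,...,x_n]/(uv − f_1^{a_1}···f_t^{a_t}) with f_i irreducible, pairwise coprime, non-constant, and a_i ≥ 1. For each i, the ideal 𝔭_i = (u, f_i) is a height one prime ideal of A, and the 𝔭_i are precisely the height one primes of A containing u. -/
universe u v

open MvPolynomial

/-- The ideal `𝔭ᵢ = (u, fᵢ)` of the hypersurface ring `A`. -/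
noncomputable def Pideal (n t : ℕ) (f : Fin t → MvPolynomial (Fin n) ℂ) (a : Fin t → ℕ)
    (i : Fin t) : Ideal (HyperRing n t f a) :=
  Ideal.span {Ideal.Quotient.mk (hyperIdeal n t f a) (X (Sum.inl 0)),
    Ideal.Quotient.mk (hyperIdeal n t f a) (rename Sum.inr (f i))}

local notation "PC" => Polynomial.C
local notation "PX" => Polynomial.X

lemma HyperAux.unit_of_deg_zero_factor {D : Type*} [CommRing D] [IsDomain D]
    {α β : D} (hα : Prime α) (hαβ : ¬ α ∣ β) {q r : Polynomial D}
    (hqr : PC α * PX - PC β = q * r) (hr : r.natDegree = 0) : IsUnit r := by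
  obtain ⟨d, hd⟩ := Polynomial.natDegree_eq_zero.mp hr
  subst hd
  have hdvd : PC d ∣ PC α * PX - PC β := ⟨q, by rw [hqr, mul_comm]⟩
  rw [Polynomial.C_dvd_iff_dvd_coeff] at hdvd
  have h1 : d ∣ α := by simpa using hdvd 1
  have h0 : d ∣ β := by
    have h := hdvd 0
    simp only [Polynomial.coeff_sub, Polynomial.mul_coeff_zero, Polynomial.coeff_C_zero,
      Polynomial.coeff_X_zero, mul_zero, zero_sub, dvd_neg] at h
    exact h
  obtain ⟨e, he⟩ := h1
  rcases hα.irreducible.isUnit_or_isUnit he with h | h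
  · exact Polynomial.isUnit_C.mpr h
  · exfalso
    obtain ⟨u, hu⟩ := h
    have : α ∣ d := ⟨↑u⁻¹, by rw [he, ← hu, Units.mul_inv_cancel_right]⟩
    exact hαβ (this.trans h0)

lemma HyperAux.prime_linear {D : Type*} [CommRing D] [IsDomain D] [UniqueFactorizationMonoid D]
    {α β : D} (hα : Prime α) (hαβ : ¬ α ∣ β) :
    Prime (PC α * PX - PC β : Polynomial D) := by
  rw [← UniqueFactorizationMonoid.irreducible_iff_prime]
  have hc1 : (PC α * PX - PC β).coeff 1 = α := by simp
  have hp0 : (PC α * PX - PC β) ≠ 0 := by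
    intro h
    rw [h] at hc1
    exact hα.ne_zero (by simpa using hc1.symm)
  have hdeg : (PC α * PX - PC β).natDegree = 1 := by
    have h1 : (PC α * PX).degree = 1 := by
      simpa using Polynomial.degree_C_mul_X hα.ne_zero
    have : (PC α * PX - PC β).degree = 1 := by
      rw [Polynomial.degree_sub_eq_left_of_degree_lt]
      · exact h1
      · rw [h1]
        exact lt_of_le_of_lt (Polynomial.degree_C_le) (by norm_num)
    exact Polynomial.natDegree_eq_of_degree_eq_some this
  constructor
  · intro hu
    have := Polynomial.natDegree_eq_zero_of_isUnit hu
    omega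
  · intro q r hqr
    have hq0 : q ≠ 0 := fun h => hp0 (by rw [hqr, h, zero_mul])
    have hr0 : r ≠ 0 := fun h => hp0 (by rw [hqr, h, mul_zero])
    have hsum : q.natDegree + r.natDegree = 1 := by
      rw [← Polynomial.natDegree_mul hq0 hr0, ← hqr, hdeg]
    rcases Nat.eq_zero_or_pos q.natDegree with h | h
    · exact Or.inl (HyperAux.unit_of_deg_zero_factor hα hαβ (by rw [hqr, mul_comm]) h)
    · exact Or.inr (HyperAux.unit_of_deg_zero_factor hα hαβ hqr (by omega))

namespace HyperAux

noncomputable section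

variable (n : ℕ)

abbrev T (n : ℕ) := MvPolynomial (Fin 2 ⊕ Fin n) ℂ
abbrev R0 (n : ℕ) := MvPolynomial (Fin n) ℂ

def E : T n ≃+* Polynomial (Polynomial (R0 n)) :=
  (sumAlgEquiv ℂ (Fin 2) (Fin n)).toRingEquiv.trans
    ((finSuccEquiv (R0 n) 1).toRingEquiv.trans
      (Polynomial.mapAlgEquiv ((finSuccEquiv (R0 n) 0).trans
        (Polynomial.mapAlgEquiv (isEmptyAlgEquiv (R0 n) (Fin 0))))).toRingEquiv)

lemma sumAlgEquiv_eq (x : T n) :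
    sumAlgEquiv ℂ (Fin 2) (Fin n) x = sumToIter ℂ (Fin 2) (Fin n) x := by
  have h : (sumAlgEquiv ℂ (Fin 2) (Fin n)).toRingEquiv.toRingHom = sumToIter ℂ (Fin 2) (Fin n) := by
    apply MvPolynomial.ringHom_ext
    · intro r
      simp [sumToIter_C]
    · rintro (j | k) <;> simp [sumToIter_Xl, sumToIter_Xr]
  exact RingHom.congr_fun h x

lemma E_u : E n (X (Sum.inl 0)) = Polynomial.X := by
  simp [E, sumAlgEquiv_eq, sumToIter_Xl, finSuccEquiv_X_zero]

lemma E_v : E n (X (Sum.inl 1)) = Polynomial.C Polynomial.X := by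
  show (Polynomial.mapAlgEquiv ((finSuccEquiv (R0 n) 0).trans
        (Polynomial.mapAlgEquiv (isEmptyAlgEquiv (R0 n) (Fin 0)))))
      ((finSuccEquiv (R0 n) 1) ((sumAlgEquiv ℂ (Fin 2) (Fin n)) (X (Sum.inl 1)))) = _
  rw [sumAlgEquiv_eq, sumToIter_Xl]
  rw [show (1 : Fin 2) = (0 : Fin 1).succ from rfl, finSuccEquiv_X_succ]
  rw [Polynomial.coe_mapAlgEquiv, Polynomial.map_C]
  congr 1
  show (Polynomial.mapAlgEquiv (isEmptyAlgEquiv (R0 n) (Fin 0)))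
      ((finSuccEquiv (R0 n) 0) (X 0)) = _
  rw [finSuccEquiv_X_zero, Polynomial.coe_mapAlgEquiv, Polynomial.map_X]

lemma E_rename (p : R0 n) : E n (rename Sum.inr p) = Polynomial.C (Polynomial.C p) := by
  have key : sumToIter ℂ (Fin 2) (Fin n) (rename Sum.inr p) = C p := by
    induction p using MvPolynomial.induction_on with
    | C c => rw [rename_C, sumToIter_C]
    | add p q hp hq => rw [map_add, map_add, hp, hq, map_add]
    | mul_X p s hp => rw [map_mul, map_mul, hp, rename_X, sumToIter_Xr, ← map_mul]
  have hC : ∀ r : R0 n, (finSuccEquiv (R0 n) 1) (C r) = Polynomial.C (C r) := by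
    intro r
    have := (finSuccEquiv (R0 n) 1).commutes r
    simpa [MvPolynomial.algebraMap_eq, Polynomial.algebraMap_apply] using this
  simp [E, sumAlgEquiv_eq, key, hC]
  have := ((finSuccEquiv (R0 n) 0).trans
      (Polynomial.mapAlgEquiv (isEmptyAlgEquiv (R0 n) (Fin 0)))).commutes p
  simpa [MvPolynomial.algebraMap_eq, Polynomial.algebraMap_apply] using this


variable (t : ℕ) (f : Fin t → MvPolynomial (Fin n) ℂ) (a : Fin t → ℕ)

def uu : T n := X (Sum.inl 0)
def vv : T n := X (Sum.inl 1)
def ww (i : Fin t) : T n := rename Sum.inr (f i)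
def gg : T n := ∏ i, ww n t f i ^ a i
def hh : T n := uu n * vv n - gg n t f a

lemma E_g : E n (gg n t f a) = Polynomial.C (Polynomial.C (∏ i, f i ^ a i)) := by
  rw [gg, map_prod, map_prod, map_prod]
  congr 1
  funext i
  rw [map_pow, map_pow, map_pow, ww, E_rename]

lemma E_h : E n (hh n t f a) =
    Polynomial.C Polynomial.X * Polynomial.X
      - Polynomial.C (Polynomial.C (∏ i, f i ^ a i)) := by
  rw [hh, map_sub, map_mul, uu, vv, E_u, E_v, E_g]
  exact congrArg (· - _) Polynomial.X_mul

lemma prime_hh (hf : ∀ i, f i ≠ 0) : Prime (hh n t f a) := by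
  rw [← MulEquiv.prime_iff (M := T n) (N := Polynomial (Polynomial (R0 n))) (E n).toMulEquiv]
  show Prime (E n (hh n t f a))
  rw [E_h]
  refine prime_linear Polynomial.prime_X ?_
  rw [Polynomial.X_dvd_iff, Polynomial.coeff_C_zero]
  exact Finset.prod_ne_zero_iff.mpr fun i _ => pow_ne_zero _ (hf i)


lemma aeval_X_comp {σ τ : Type*} (g : σ → τ) (p : MvPolynomial σ ℂ) :
    aeval (fun k => (X (g k) : MvPolynomial τ ℂ)) p = rename g p := by
  have h := MvPolynomial.aeval_unique
    (rename g : MvPolynomial σ ℂ →ₐ[ℂ] MvPolynomial τ ℂ)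
  rw [show (⇑(rename g : MvPolynomial σ ℂ →ₐ[ℂ] MvPolynomial τ ℂ) ∘ X)
      = fun k => (X (g k) : MvPolynomial τ ℂ) from funext fun k => rename_X g k] at h
  exact (DFunLike.congr_fun h p).symm

lemma uu_not_mem : uu n ∉ Ideal.span {hh n t f a} := by
  intro hm
  obtain ⟨c, hc⟩ := Ideal.mem_span_singleton.mp hm
  let ev : T n →ₐ[ℂ] T n := aeval (Sum.elim ![1, gg n t f a] fun k => X (Sum.inr k))
  have hgg : ev (gg n t f a) = gg n t f a := by
    rw [gg, map_prod]
    congr 1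
    funext j
    rw [map_pow]
    congr 1
    show aeval _ (rename Sum.inr (f j)) = _
    rw [aeval_rename]
    exact aeval_X_comp Sum.inr (f j)
  have h0 : ev (hh n t f a) = 0 := by
    rw [hh, map_sub, map_mul, hgg]
    have h1 : ev (uu n) = 1 := by simp [ev, uu, aeval_X]
    have h2 : ev (vv n) = gg n t f a := by simp [ev, vv, aeval_X]
    rw [h1, h2, one_mul, sub_self]
  have hone : (1 : T n) = 0 := by
    have h1 : ev (uu n) = 1 := by simp [ev, uu, aeval_X]
    calc (1 : T n) = ev (uu n) := h1.symm
    _ = ev (hh n t f a) * ev c := by rw [hc, map_mul]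
    _ = 0 := by rw [h0, zero_mul]
  exact one_ne_zero hone

lemma P'_facts (i : Fin t) (hf : Irreducible (f i)) :
    (Ideal.span {uu n, ww n t f i}).IsPrime ∧ vv n ∉ Ideal.span {uu n, ww n t f i} := by
  classical
  haveI hfi : (Ideal.span {f i} : Ideal (R0 n)).IsPrime :=
    (Ideal.span_singleton_prime hf.ne_zero).mpr
      (UniqueFactorizationMonoid.irreducible_iff_prime.mp hf)
  haveI : IsDomain (R0 n ⧸ Ideal.span {f i}) :=
    (Ideal.Quotient.isDomain_iff_prime _).mpr hfi
  let mkK : R0 n →ₐ[ℂ] (R0 n ⧸ Ideal.span {f i}) := Ideal.Quotient.mkₐ ℂ _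
  let ψ : R0 n →ₐ[ℂ] Polynomial (R0 n ⧸ Ideal.span {f i}) := Polynomial.CAlgHom.comp mkK
  let Φ : T n →ₐ[ℂ] Polynomial (R0 n ⧸ Ideal.span {f i}) :=
    aeval (Sum.elim ![0, Polynomial.X] fun k => Polynomial.C (mkK (X k)))
  have hΦu : Φ (uu n) = 0 := by simp [Φ, uu, aeval_X]
  have hΦv : Φ (vv n) = Polynomial.X := by simp [Φ, vv, aeval_X]
  have hΦr : ∀ p : R0 n, Φ (rename Sum.inr p) = Polynomial.C (mkK p) := by
    intro p
    show aeval _ (rename Sum.inr p) = _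
    rw [aeval_rename]
    have h := MvPolynomial.aeval_unique (S₁ := Polynomial (R0 n ⧸ Ideal.span {f i})) ψ
    have h2 : (⇑ψ ∘ X) = fun k => Polynomial.C (mkK (X k)) := rfl
    rw [h2] at h
    exact (DFunLike.congr_fun h p).symm
  have hΦw : Φ (ww n t f i) = 0 := by
    rw [ww, hΦr]
    have : mkK (f i) = 0 := Ideal.Quotient.eq_zero_iff_mem.mpr (Ideal.subset_span rfl)
    rw [this, map_zero]
  set Q : Ideal (T n) := Ideal.span {uu n, ww n t f i} with hQdef
  let πQ : T n →ₐ[ℂ] T n ⧸ Q := Ideal.Quotient.mkₐ ℂ Q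
  have hπQu : πQ (uu n) = 0 :=
    Ideal.Quotient.eq_zero_iff_mem.mpr (Ideal.subset_span (by simp))
  let Ψ₀ : R0 n →ₐ[ℂ] T n ⧸ Q := πQ.comp (rename Sum.inr)
  have hΨ₀ : ∀ p : R0 n, Ψ₀ p = πQ (rename Sum.inr p) := fun p => rfl
  have hker : ∀ x ∈ (Ideal.span {f i} : Ideal (R0 n)), Ψ₀ x = 0 := by
    intro x hx
    obtain ⟨c, rfl⟩ := Ideal.mem_span_singleton.mp hx
    rw [map_mul]
    have h1 : Ψ₀ (f i) = 0 := by
      rw [hΨ₀]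
      exact Ideal.Quotient.eq_zero_iff_mem.mpr (Ideal.subset_span (by simp [ww]))
    rw [h1, zero_mul]
  let Ψ₁ : (R0 n ⧸ Ideal.span {f i}) →ₐ[ℂ] T n ⧸ Q := Ideal.Quotient.liftₐ _ Ψ₀ hker
  let Ψ : Polynomial (R0 n ⧸ Ideal.span {f i}) →ₐ[ℂ] T n ⧸ Q :=
    Polynomial.aevalTower Ψ₁ (πQ (vv n))
  have hcompAH : Ψ.comp Φ = πQ := by
    apply MvPolynomial.algHom_ext
    rintro (j | k)
    · fin_cases j
      · show Ψ (Φ (uu n)) = πQ (uu n)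
        rw [hΦu, map_zero, hπQu]
      · show Ψ (Φ (vv n)) = πQ (vv n)
        rw [hΦv]
        exact Polynomial.aevalTower_X _ _
    · show Ψ (Φ (X (Sum.inr k))) = πQ (X (Sum.inr k))
      have hx : (X (Sum.inr k) : T n) = rename Sum.inr (X k) := (rename_X _ _).symm
      rw [hx, hΦr, Polynomial.aevalTower_C]
      show Ψ₁ (Ideal.Quotient.mk _ (X k)) = _
      rw [show Ψ₁ = Ideal.Quotient.liftₐ _ Ψ₀ hker from rfl, Ideal.Quotient.liftₐ_apply]
      rfl
  have hcomp : ∀ x : T n, Ψ (Φ x) = πQ x := fun x => DFunLike.congr_fun hcompAH x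
  have hkerΦ : RingHom.ker Φ = Q := by
    apply le_antisymm
    · intro x hx
      have hx0 : Φ x = 0 := hx
      have := hcomp x
      rw [hx0, map_zero] at this
      have : Ideal.Quotient.mk Q x = 0 := by
        rw [← Ideal.Quotient.mkₐ_eq_mk (R₁ := ℂ)]
        exact this.symm
      exact Ideal.Quotient.eq_zero_iff_mem.mp this
    · rw [hQdef, Ideal.span_le]
      rintro x hx
      simp only [Set.mem_insert_iff, Set.mem_singleton_iff] at hx
      rcases hx with rfl | rfl
      · exact hΦu
      · exact hΦw
  constructor
  · rw [← hkerΦ]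
    exact RingHom.ker_isPrime Φ
  · intro hv
    have : Φ (vv n) = 0 := by rw [← hkerΦ] at hv; exact hv
    rw [hΦv] at this
    exact Polynomial.X_ne_zero this


lemma height_eq_one_of {α : Type*} [PartialOrder α] {b p : α}
    (hbot : ∀ x, b ≤ x) (hne : b ≠ p) (hmax : ∀ x, x < p → x = b) :
    Order.height p = 1 := by
  have hb0 : Order.height b = 0 := Order.height_eq_zero.mpr (fun c _ => hbot c)
  rw [Order.height_eq_iSup_lt_height]
  apply le_antisymm
  · refine iSup₂_le fun x hx => ?_
    rw [hmax x hx, hb0]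
    simp
  · have hlt : b < p := (hbot p).lt_of_ne hne
    have h2 := le_iSup₂ (f := fun (x : α) (_ : x < p) => Order.height x + 1) b hlt
    rw [hb0] at h2
    simpa using h2

end
end HyperAux


/-- **The height one primes of `A` containing `u`.**
For `A = ℂ[u,v,x₁,…,xₙ]/(uv - f₁^{a₁} ⋯ f_t^{a_t})` with the `fᵢ` non-constant
irreducible pairwise coprime polynomials and `aᵢ ≥ 1`: each ideal `𝔭ᵢ = (u, fᵢ)` is a
height one prime ideal of `A`, and the `𝔭ᵢ` are precisely the height one primes of `A`
containing `u`. -/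
theorem hyperRing_heightOne_primes_over_u (n t : ℕ) (f : Fin t → MvPolynomial (Fin n) ℂ)
    (hirr : ∀ i, Irreducible (f i)) (hcop : ∀ i j, i ≠ j → IsRelPrime (f i) (f j))
    (a : Fin t → ℕ) (ha : ∀ i, 1 ≤ a i) :
    (∀ i : Fin t, ∃ hp : (Pideal n t f a i).IsPrime,
        Order.height (⟨Pideal n t f a i, hp⟩ : PrimeSpectrum (HyperRing n t f a)) = 1) ∧
    (∀ (q : Ideal (HyperRing n t f a)) (hq : q.IsPrime), uElem n t f a ∈ q →
        Order.height (⟨q, hq⟩ : PrimeSpectrum (HyperRing n t f a)) = 1 →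
        ∃ i : Fin t, q = Pideal n t f a i) := by
  classical
  have hfne : ∀ i, f i ≠ 0 := fun i => (hirr i).ne_zero
  have hprime : Prime (HyperAux.hh n t f a) := HyperAux.prime_hh n t f a hfne
  have hIdeq : hyperIdeal n t f a = Ideal.span {HyperAux.hh n t f a} := rfl
  haveI hIp : (hyperIdeal n t f a).IsPrime := by
    rw [hIdeq]; exact (Ideal.span_singleton_prime hprime.ne_zero).mpr hprime
  haveI hdom : IsDomain (HyperRing n t f a) := (Ideal.Quotient.isDomain_iff_prime _).mpr hIp
  set π := Ideal.Quotient.mk (hyperIdeal n t f a) with hπ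
  have huel : uElem n t f a = π (HyperAux.uu n) := rfl
  have hPideq : ∀ i, Pideal n t f a i
      = Ideal.span {π (HyperAux.uu n), π (HyperAux.ww n t f i)} := fun _ => rfl
  have hrel : π (HyperAux.uu n) * π (HyperAux.vv n)
      = ∏ j, (π (HyperAux.ww n t f j)) ^ (a j) := by
    have h0 : π (HyperAux.hh n t f a) = 0 :=
      Ideal.Quotient.eq_zero_iff_mem.mpr (hIdeq ▸ Ideal.subset_span rfl)
    have h1 : π (HyperAux.uu n) * π (HyperAux.vv n) - π (HyperAux.gg n t f a) = 0 := by
      rw [← map_mul, ← map_sub]; exact h0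
    have h2 : π (HyperAux.gg n t f a) = ∏ j, (π (HyperAux.ww n t f j)) ^ (a j) := by
      rw [HyperAux.gg, map_prod]; simp [map_pow]
    rw [sub_eq_zero] at h1
    rw [h1, h2]
  have hP' := fun i => HyperAux.P'_facts n t f i (hirr i)
  have hhmem : ∀ i, HyperAux.hh n t f a
      ∈ Ideal.span {HyperAux.uu n, HyperAux.ww n t f i} := by
    intro i
    have hu : HyperAux.uu n * HyperAux.vv n
        ∈ Ideal.span {HyperAux.uu n, HyperAux.ww n t f i} :=
      Ideal.mul_mem_right _ _ (Ideal.subset_span (by simp))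
    have hg : HyperAux.gg n t f a ∈ Ideal.span {HyperAux.uu n, HyperAux.ww n t f i} := by
      have hdvd : HyperAux.ww n t f i ∣ HyperAux.gg n t f a := by
        rw [HyperAux.gg]
        exact dvd_trans (dvd_pow_self _ (Nat.one_le_iff_ne_zero.mp (ha i)))
          (Finset.dvd_prod_of_mem _ (Finset.mem_univ i))
      obtain ⟨c, hc⟩ := hdvd
      rw [hc]
      exact Ideal.mul_mem_right _ _ (Ideal.subset_span (by simp))
    exact Ideal.sub_mem _ hu hg
  have hmap : ∀ i, Pideal n t f a i
      = Ideal.map π (Ideal.span {HyperAux.uu n, HyperAux.ww n t f i}) := by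
    intro i
    rw [Ideal.map_span, Set.image_pair]
    exact hPideq i
  have hPp : ∀ i, (Pideal n t f a i).IsPrime := by
    intro i
    haveI := (hP' i).1
    rw [hmap i]
    exact Ideal.map_isPrime_of_surjective Ideal.Quotient.mk_surjective
      (by rw [Ideal.mk_ker, hIdeq]
          exact Ideal.span_le.mpr (Set.singleton_subset_iff.mpr (hhmem i)))
  have hcomap : ∀ i, Ideal.comap π (Pideal n t f a i)
      = Ideal.span {HyperAux.uu n, HyperAux.ww n t f i} := by
    intro i
    rw [hmap i, Ideal.comap_map_of_surjective π Ideal.Quotient.mk_surjective,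
      ← RingHom.ker_eq_comap_bot, Ideal.mk_ker, hIdeq]
    exact sup_eq_left.mpr (Ideal.span_le.mpr (Set.singleton_subset_iff.mpr (hhmem i)))
  have hmem_iff : ∀ i (x : MvPolynomial (Fin 2 ⊕ Fin n) ℂ), π x ∈ Pideal n t f a i
      ↔ x ∈ Ideal.span {HyperAux.uu n, HyperAux.ww n t f i} := by
    intro i x
    rw [← hcomap i]
    exact Iff.rfl
  have hu0 : π (HyperAux.uu n) ≠ 0 := by
    intro h
    exact HyperAux.uu_not_mem n t f a (hIdeq ▸ Ideal.Quotient.eq_zero_iff_mem.mp h)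
  -- every prime strictly below Pideal i is ⊥
  have hbelow : ∀ i (q : Ideal (HyperRing n t f a)), q.IsPrime →
      q < Pideal n t f a i → q = ⊥ := by
    intro i q hq hlt
    haveI := hPp i
    haveI := hq
    set L := Localization.AtPrime (Pideal n t f a i) with hL
    set ι := algebraMap (HyperRing n t f a) L with hι
    haveI : IsDomain L := IsLocalization.isDomain_of_local_atPrime (hPp i)
    haveI : IsNoetherianRing L :=
      IsLocalization.isNoetherianRing (Pideal n t f a i).primeCompl L inferInstance
    have hvnot : π (HyperAux.vv n) ∉ Pideal n t f a i := by
      rw [hmem_iff]; exact (hP' i).2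
    have hvunit : IsUnit (ι (π (HyperAux.vv n))) :=
      (IsLocalization.AtPrime.isUnit_to_map_iff L (Pideal n t f a i) _).mpr hvnot
    set tl := ι (π (HyperAux.ww n t f i)) with htl
    have hwmem : π (HyperAux.ww n t f i) ∈ Pideal n t f a i := by
      rw [hPideq i]
      exact Ideal.subset_span (by simp)
    have hmeq : Ideal.map ι (Pideal n t f a i) = IsLocalRing.maximalIdeal L :=
      Localization.AtPrime.map_eq_maximalIdeal
    have htm : tl ∈ IsLocalRing.maximalIdeal L := by
      rw [← hmeq]
      exact Ideal.mem_map_of_mem _ hwmem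
    have hrelL : ι (π (HyperAux.uu n)) * ι (π (HyperAux.vv n))
        = ∏ j, (ι (π (HyperAux.ww n t f j))) ^ (a j) := by
      rw [← map_mul, hrel, map_prod]; simp [map_pow]
    have hdvdu : tl ∣ ι (π (HyperAux.uu n)) := by
      have h1 : tl ∣ ∏ j, (ι (π (HyperAux.ww n t f j))) ^ (a j) :=
        dvd_trans (dvd_pow_self _ (Nat.one_le_iff_ne_zero.mp (ha i)))
          (Finset.dvd_prod_of_mem _ (Finset.mem_univ i))
      obtain ⟨u, hu⟩ := hvunit
      have heq : ι (π (HyperAux.uu n))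
          = (∏ j, (ι (π (HyperAux.ww n t f j))) ^ (a j)) * ↑u⁻¹ := by
        rw [← hrelL, ← hu, Units.mul_inv_cancel_right]
      rw [heq]
      exact h1.mul_right _
    have hmle : Ideal.map ι (Pideal n t f a i) ≤ Ideal.span {tl} := by
      refine Ideal.map_le_iff_le_comap.mpr (le_of_eq_of_le (hPideq i) ?_)
      refine Ideal.span_le.mpr ?_
      rintro x hx
      simp only [Set.mem_insert_iff, Set.mem_singleton_iff] at hx
      rcases hx with rfl | rfl
      · exact Ideal.mem_comap.mpr (Ideal.mem_span_singleton.mpr hdvdu)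
      · exact Ideal.mem_comap.mpr (Ideal.mem_span_singleton.mpr dvd_rfl)
    have hmspan : IsLocalRing.maximalIdeal L = Ideal.span {tl} := by
      apply le_antisymm
      · rw [← hmeq]; exact hmle
      · exact Ideal.span_le.mpr (Set.singleton_subset_iff.mpr htm)
    have hdisj : Disjoint ((Pideal n t f a i).primeCompl : Set (HyperRing n t f a))
        (q : Set (HyperRing n t f a)) := by
      rw [Set.disjoint_left]
      intro x hx hxq
      exact hx (hlt.le hxq)
    have hPprime : (Ideal.map ι q).IsPrime :=
      IsLocalization.isPrime_of_isPrime_disjoint (Pideal n t f a i).primeCompl L q hq hdisj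
    have hcomapP : Ideal.comap ι (Ideal.map ι q) = q :=
      IsLocalization.comap_map_of_isPrime_disjoint (Pideal n t f a i).primeCompl L hq hdisj
    have hPle : Ideal.map ι q ≤ IsLocalRing.maximalIdeal L := by
      rw [← hmeq]
      exact Ideal.map_mono hlt.le
    have htP : tl ∉ Ideal.map ι q := by
      intro h
      have h1 : IsLocalRing.maximalIdeal L ≤ Ideal.map ι q := by
        rw [hmspan]
        exact Ideal.span_le.mpr (Set.singleton_subset_iff.mpr h)
      have h2 : Ideal.map ι q = IsLocalRing.maximalIdeal L := le_antisymm hPle h1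
      have h3 : q = Pideal n t f a i := by
        rw [← hcomapP, h2, ← hmeq]
        exact IsLocalization.comap_map_of_isPrime_disjoint (Pideal n t f a i).primeCompl L
          (hPp i)
          (by rw [Set.disjoint_left]; exact fun x hx hxq => hx hxq)
      exact hlt.ne h3
    have hpow : ∀ k : ℕ, Ideal.map ι q ≤ (IsLocalRing.maximalIdeal L) ^ k := by
      intro k
      induction k with
      | zero => simp [Ideal.one_eq_top]
      | succ k ih =>
        intro x hx
        have hxm : x ∈ Ideal.span {tl} := by rw [← hmspan]; exact hPle hx
        obtain ⟨y, hy⟩ := Ideal.mem_span_singleton.mp hxm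
        have hyq : y ∈ Ideal.map ι q := by
          rcases hPprime.mem_or_mem (hy ▸ hx) with h | h
          · exact absurd h htP
          · exact h
        rw [hy, mul_comm, pow_succ]
        exact Ideal.mul_mem_mul (ih hyq) htm
    have hbotP : Ideal.map ι q = ⊥ := by
      have h1 : Ideal.map ι q ≤ ⨅ k : ℕ, (IsLocalRing.maximalIdeal L) ^ k := le_iInf hpow
      have h2 : (⨅ k : ℕ, (IsLocalRing.maximalIdeal L) ^ k) = ⊥ :=
        Ideal.iInf_pow_eq_bot_of_isDomain (R := L) _ (IsLocalRing.maximalIdeal.isMaximal L).ne_top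
      exact le_bot_iff.mp (le_trans h1 (le_of_eq h2))
    rw [← hcomapP, hbotP]
    exact Ideal.comap_bot_of_injective ι
      (IsLocalization.injective L (Pideal n t f a i).primeCompl_le_nonZeroDivisors)
  -- heights
  have hbotprime : (⊥ : Ideal (HyperRing n t f a)).IsPrime := Ideal.bot_prime
  have hheight : ∀ i (hp : (Pideal n t f a i).IsPrime),
      Order.height (⟨Pideal n t f a i, hp⟩ : PrimeSpectrum (HyperRing n t f a)) = 1 := by
    intro i hp
    apply HyperAux.height_eq_one_of (b := (⟨⊥, hbotprime⟩ : PrimeSpectrum (HyperRing n t f a)))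
    · intro x
      exact (PrimeSpectrum.asIdeal_le_asIdeal _ _).mp bot_le
    · intro hEq
      have h1 : Pideal n t f a i = (⊥ : Ideal (HyperRing n t f a)) :=
        (congrArg PrimeSpectrum.asIdeal hEq).symm
      apply hu0
      have : π (HyperAux.uu n) ∈ Pideal n t f a i := by
        rw [hPideq i]
        exact Ideal.subset_span (by simp)
      rwa [h1, Ideal.mem_bot] at this
    · intro x hx
      have h1 : x.asIdeal < Pideal n t f a i :=
        (PrimeSpectrum.asIdeal_lt_asIdeal _ _).mpr hx
      have h2 : x.asIdeal = ⊥ := hbelow i x.asIdeal x.2 h1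
      exact PrimeSpectrum.ext h2
  constructor
  · intro i
    exact ⟨hPp i, hheight i (hPp i)⟩
  · intro q hq huq hht
    have hprod : ∏ j, (π (HyperAux.ww n t f j)) ^ (a j) ∈ q := by
      rw [← hrel]
      exact Ideal.mul_mem_right _ _ (huel ▸ huq)
    obtain ⟨i, -, hi⟩ := (Ideal.IsPrime.prod_mem_iff (hp := hq)).mp hprod
    have hwi : π (HyperAux.ww n t f i) ∈ q :=
      (hq.pow_mem_iff_mem _ (Nat.lt_of_lt_of_le Nat.zero_lt_one (ha i))).mp hi
    have hle : Pideal n t f a i ≤ q := by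
      rw [hPideq i]
      refine Ideal.span_le.mpr ?_
      rintro x hx
      simp only [Set.mem_insert_iff, Set.mem_singleton_iff] at hx
      rcases hx with rfl | rfl
      · exact huel ▸ huq
      · exact hwi
    refine ⟨i, ?_⟩
    by_contra hne
    have hlt : Pideal n t f a i < q := lt_of_le_of_ne hle (fun h => hne h.symm)
    have hltpt : (⟨Pideal n t f a i, hPp i⟩ : PrimeSpectrum (HyperRing n t f a))
        < ⟨q, hq⟩ := (PrimeSpectrum.asIdeal_lt_asIdeal _ _).mpr hlt
    have hmono := Order.height_strictMono hltpt
      (by rw [hheight i (hPp i)]; exact Ne.lt_top (by decide))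
    rw [hheight i (hPp i), hht] at hmono
    exact lt_irrefl _ hmono
end

section
/- Let A = ℂ[u,v,x_1,...,x_n]/(uv − f_1^{a_1}···f_t^{a_t}) with f_i irreducible, pairwise coprime, non-constant, a_i ≥ 1, and let 𝔭_i = (u, f_i). Then the valuation of u at 𝔭_i equals a_i, i.e. ν_{𝔭_i}(u) = a_i, so that div(u) = Σ_{i=1}^{t} a_i · 𝔭_i. -/
universe u v

/-! ### Valuations at primes and the divisor class group -/

/-- The order (valuation) of `a` at the prime `p`: the supremum of the `n` such that `a`
lies in the `n`-th power of the maximal ideal `pR_p` of the localization `R_p`.  For the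
localization at a height one prime of a normal noetherian domain, `R_p` is a discrete
valuation ring and this is the associated valuation `ν_p`. -/
noncomputable def ordAt (R : Type u) [CommRing R] (p : Ideal R) [p.IsPrime] (a : R) : ℕ∞ :=
  ⨆ n ∈ {n : ℕ | algebraMap R (Localization.AtPrime p) a ∈
      Ideal.map (algebraMap R (Localization.AtPrime p)) p ^ n}, (n : ℕ∞)

/-- The set of height one primes of `R`. -/
def heightOnePrimes (R : Type u) [CommRing R] : Set (PrimeSpectrum R) :=
  { p | Order.height p = 1 }

open MvPolynomial

/-! ### Auxiliary material -/

namespace HyperAux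

section OneVar
open Polynomial
variable {S : Type v} [CommRing S]

/-- A linear polynomial `π X - γ` over a UFD with `π` prime not dividing `γ` is prime. -/
lemma prime_linear_s12 [IsDomain S] [UniqueFactorizationMonoid S]
    {π γ : S} (hπ : Prime π) (hdvd : ¬ π ∣ γ) :
    Prime (Polynomial.C π * Polynomial.X - Polynomial.C γ) := by
  set Cp : S →+* S[X] := Polynomial.C with hCp
  have hne : (Cp π * Polynomial.X - Cp γ) = Cp π * Polynomial.X + Cp (-γ) := by
    rw [map_neg]; ring
  have hdeg : (Cp π * Polynomial.X - Cp γ).degree = 1 := by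
    rw [hne]; exact degree_linear hπ.ne_zero
  have hCunit : ∀ s : S, (Cp s ∣ Cp π * Polynomial.X - Cp γ) → IsUnit (Cp s : S[X]) := by
    intro s hs
    rw [hCp, Polynomial.C_dvd_iff_dvd_coeff] at hs
    have h1 : s ∣ π := by simpa using hs 1
    have h0 : s ∣ γ := by
      have h := hs 0
      have hco : (Polynomial.C π * Polynomial.X - Polynomial.C γ).coeff 0 = -γ := by simp
      rw [hco, dvd_neg] at h
      exact h
    obtain ⟨d, hd⟩ := h1
    rcases hπ.irreducible.isUnit_or_isUnit hd with h | h
    · exact (isUnit_C).mpr h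
    · exfalso
      apply hdvd
      obtain ⟨e, he⟩ := h.exists_right_inv
      exact Dvd.dvd.trans ⟨e, by rw [hd]; rw [mul_assoc, he, mul_one]⟩ h0
  rw [← UniqueFactorizationMonoid.irreducible_iff_prime]
  constructor
  · intro hu
    rw [Polynomial.degree_eq_zero_of_isUnit hu] at hdeg
    exact absurd hdeg (by norm_num)
  · intro b c heq
    have hb0 : b ≠ 0 := by rintro rfl; rw [zero_mul] at heq; rw [heq] at hdeg; simp at hdeg
    have hc0 : c ≠ 0 := by rintro rfl; rw [mul_zero] at heq; rw [heq] at hdeg; simp at hdeg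
    have hdegs : b.natDegree + c.natDegree = 1 := by
      have h1 := natDegree_mul hb0 hc0
      rw [← heq] at h1
      have h2 : (Cp π * Polynomial.X - Cp γ).natDegree = 1 := natDegree_eq_of_degree_eq_some hdeg
      omega
    rcases Nat.add_eq_one_iff.mp hdegs with ⟨h1, h2⟩ | ⟨h1, h2⟩
    · left
      have hb := Polynomial.eq_C_of_natDegree_eq_zero h1
      rw [hb]
      exact hCunit _ (by rw [hb] at heq; exact heq ▸ Dvd.intro _ rfl)
    · right
      have hc := Polynomial.eq_C_of_natDegree_eq_zero h2
      rw [hc]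
      exact hCunit _ (by rw [hc] at heq; exact heq ▸ Dvd.intro_left _ rfl)

/-- The kernel of `R[v][u] → (R/(g))[v]`, `u ↦ 0`, is `(u, g)`. -/
lemma ker_psi (g : S) :
    RingHom.ker ((Polynomial.mapRingHom (Ideal.Quotient.mk (Ideal.span {g}))).comp
        (Polynomial.evalRingHom (0 : Polynomial S))) =
      Ideal.span {(Polynomial.X : Polynomial (Polynomial S)),
        Polynomial.C (Polynomial.C g)} := by
  apply le_antisymm
  · intro p hp
    rw [RingHom.mem_ker, RingHom.comp_apply, coe_evalRingHom, coe_mapRingHom] at hp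
    have hdvd : Polynomial.C g ∣ p.eval 0 := by
      rw [Polynomial.C_dvd_iff_dvd_coeff]
      intro k
      have : (Ideal.Quotient.mk (Ideal.span {g})) ((p.eval 0).coeff k) = 0 := by
        rw [← Polynomial.coeff_map, hp, Polynomial.coeff_zero]
      rw [Ideal.Quotient.eq_zero_iff_mem, Ideal.mem_span_singleton] at this
      exact this
    obtain ⟨q, hq⟩ : (Polynomial.X : Polynomial (Polynomial S)) ∣
        p - Polynomial.C (p.eval 0) := by
      rw [X_dvd_iff]
      simp [coeff_zero_eq_eval_zero]
    obtain ⟨r, hr⟩ : Polynomial.C (Polynomial.C g) ∣ Polynomial.C (p.eval 0) :=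
      map_dvd (Polynomial.C : Polynomial S →+* _) hdvd
    refine Ideal.mem_span_pair.mpr ⟨q, r, ?_⟩
    rw [mul_comm q Polynomial.X, ← hq, mul_comm r, ← hr]; ring
  · rw [Ideal.span_le]
    rintro x (rfl | rfl) <;>
      simp [RingHom.mem_ker, Ideal.Quotient.eq_zero_iff_mem, Ideal.mem_span_singleton,
        SetLike.mem_coe]

end OneVar

variable (n : ℕ)

/-- The ring of coefficients `R = ℂ[x₁,…,xₙ]`. -/
abbrev Rn := MvPolynomial (Fin n) ℂ

/-- The identification `ℂ[u,v,x₁,…,xₙ] ≃ R[v][u]`. -/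
noncomputable def EE : MvPolynomial (Fin 2 ⊕ Fin n) ℂ ≃+* Polynomial (Polynomial (Rn n)) :=
  (sumAlgEquiv ℂ (Fin 2) (Fin n)).toRingEquiv.trans
    ((finSuccEquiv (Rn n) 1).toRingEquiv.trans
      (Polynomial.mapEquiv ((finSuccEquiv (Rn n) 0).toRingEquiv.trans
        (Polynomial.mapEquiv (isEmptyAlgEquiv (Rn n) (Fin 0)).toRingEquiv))))

lemma sumAE_Xl (i : Fin 2) : (sumAlgEquiv ℂ (Fin 2) (Fin n)) (X (Sum.inl i)) = X i := by
  simp [sumAlgEquiv_X_inl]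

lemma sumAE_inr (g : Rn n) : (sumAlgEquiv ℂ (Fin 2) (Fin n)) (rename Sum.inr g) = C g := by
  have := congrFun (congrArg
    (fun (ψ : MvPolynomial (Fin n) ℂ →ₐ[ℂ] MvPolynomial (Fin 2) (MvPolynomial (Fin n) ℂ)) =>
      (ψ : MvPolynomial (Fin n) ℂ → _)) (sumAlgEquiv_comp_rename_inr ℂ (Fin 2) (Fin n))) g
  simpa using this

lemma EE_u : EE n (X (Sum.inl 0)) = Polynomial.X := by
  simp [EE, sumAE_Xl, finSuccEquiv_X_zero, Polynomial.mapEquiv]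

lemma EE_v : EE n (X (Sum.inl 1)) = Polynomial.C Polynomial.X := by
  have h1 : (1 : Fin 2) = Fin.succ 0 := rfl
  rw [EE]
  simp only [RingEquiv.trans_apply, AlgEquiv.toRingEquiv_eq_coe, AlgEquiv.coe_ringEquiv]
  rw [sumAE_Xl, h1, finSuccEquiv_X_succ]
  simp [Polynomial.mapEquiv, finSuccEquiv_X_zero]

lemma EE_g (g : Rn n) : EE n (rename Sum.inr g) = Polynomial.C (Polynomial.C g) := by
  rw [EE]
  simp only [RingEquiv.trans_apply, AlgEquiv.toRingEquiv_eq_coe, AlgEquiv.coe_ringEquiv]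
  rw [sumAE_inr]
  have h2 : (finSuccEquiv (Rn n) 1) (C g) = Polynomial.C (C g) := by
    simp [finSuccEquiv_apply]
  rw [h2]
  have h3 : (finSuccEquiv (Rn n) 0) (C g) = Polynomial.C (C g) := by
    simp [finSuccEquiv_apply]
  simp [Polynomial.mapEquiv, h3]
  exact MvPolynomial.coeff_zero_C g

variable (t : ℕ) (f : Fin t → MvPolynomial (Fin n) ℂ) (a : Fin t → ℕ)

/-- `g = f₁^{a₁} ⋯ f_t^{a_t}`. -/
noncomputable def gp : Rn n := ∏ j, f j ^ a j

/-- The image of `uv - g` under the identification. -/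
lemma EE_hyper :
    EE n (X (Sum.inl 0) * X (Sum.inl 1) - ∏ i, (rename Sum.inr (f i)) ^ a i) =
      Polynomial.C (Polynomial.X : Polynomial (Rn n)) * Polynomial.X -
        Polynomial.C (Polynomial.C (gp n t f a)) := by
  rw [map_sub, map_mul, EE_u, EE_v, map_prod]
  have h1 : ∀ i : Fin t, (EE n) ((rename Sum.inr) (f i) ^ a i) =
      ((Polynomial.C : Polynomial (Rn n) →+* _).comp
        (Polynomial.C : Rn n →+* _)) (f i ^ a i) := by
    intro i
    rw [map_pow, EE_g, RingHom.comp_apply, ← map_pow, ← map_pow]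
  rw [Finset.prod_congr rfl fun i _ => h1 i, ← map_prod, RingHom.comp_apply, gp, Polynomial.X_mul_C]

variable {n t f a} in
lemma comap_span_pair (e : MvPolynomial (Fin 2 ⊕ Fin n) ℂ ≃+* Polynomial (Polynomial (Rn n)))
    (y z : MvPolynomial (Fin 2 ⊕ Fin n) ℂ) :
    Ideal.comap (e : MvPolynomial (Fin 2 ⊕ Fin n) ℂ →+* Polynomial (Polynomial (Rn n)))
      (Ideal.span {e y, e z}) = Ideal.span {y, z} := by
  ext x
  rw [Ideal.mem_comap, Ideal.mem_span_pair, Ideal.mem_span_pair]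
  constructor
  · rintro ⟨c, d, h⟩
    exact ⟨e.symm c, e.symm d, e.injective (by simpa [map_add, map_mul] using h)⟩
  · rintro ⟨c, d, rfl⟩
    exact ⟨e c, e d, by simp [map_add, map_mul]⟩

variable {n t f a} in
lemma comap_span_singleton
    (e : MvPolynomial (Fin 2 ⊕ Fin n) ℂ ≃+* Polynomial (Polynomial (Rn n)))
    (y : MvPolynomial (Fin 2 ⊕ Fin n) ℂ) :
    Ideal.comap (e : MvPolynomial (Fin 2 ⊕ Fin n) ℂ →+* Polynomial (Polynomial (Rn n)))
      (Ideal.span {e y}) = Ideal.span {y} := by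
  ext x
  rw [Ideal.mem_comap, Ideal.mem_span_singleton]
  rw [show ((e : MvPolynomial (Fin 2 ⊕ Fin n) ℂ →+* Polynomial (Polynomial (Rn n))) x ∈ Ideal.span {e y}) ↔ e y ∣ e x from
    ⟨fun h => let ⟨k, hk⟩ := Ideal.mem_span_singleton'.mp h; Dvd.intro_left k hk,
     fun ⟨k, hk⟩ => Ideal.mem_span_singleton'.mpr ⟨k, (mul_comm k _).trans hk.symm⟩⟩]
  constructor
  · rintro ⟨c, h⟩
    exact ⟨e.symm c, e.injective (by simpa [map_mul] using h)⟩
  · rintro ⟨c, rfl⟩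
    exact ⟨e c, by simp [map_mul]⟩

lemma gp_ne_zero (hirr : ∀ i, Irreducible (f i)) : gp n t f a ≠ 0 := by
  rw [gp]
  exact Finset.prod_ne_zero_iff.mpr fun i _ => pow_ne_zero _ (hirr i).ne_zero

/-- The defining polynomial, viewed in `R[v][u]`. -/
noncomputable def Hp : Polynomial (Polynomial (Rn n)) :=
  Polynomial.C (Polynomial.X : Polynomial (Rn n)) * Polynomial.X -
    Polynomial.C (Polynomial.C (gp n t f a))

lemma hyperIdeal_eq_comap :
    hyperIdeal n t f a = Ideal.comap (EE n : MvPolynomial (Fin 2 ⊕ Fin n) ℂ →+* Polynomial (Polynomial (Rn n))) (Ideal.span {Hp n t f a}) := by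
  rw [hyperIdeal, Hp, ← EE_hyper]
  exact (comap_span_singleton (EE n) _).symm

lemma Hp_prime (hirr : ∀ i, Irreducible (f i)) : Prime (Hp n t f a) := by
  rw [Hp]
  refine prime_linear_s12 Polynomial.prime_X ?_
  rw [Polynomial.X_dvd_iff, Polynomial.coeff_C]
  simpa using gp_ne_zero n t f a hirr

lemma hyperIdeal_isPrime (hirr : ∀ i, Irreducible (f i)) : (hyperIdeal n t f a).IsPrime := by
  rw [hyperIdeal_eq_comap]
  haveI : (Ideal.span {Hp n t f a}).IsPrime :=
    (Ideal.span_singleton_prime (Hp_prime n t f a hirr).ne_zero).mpr (Hp_prime n t f a hirr)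
  exact Ideal.IsPrime.comap _

/-- The ideal `(u, fᵢ)` upstairs. -/
noncomputable def Jideal (i : Fin t) : Ideal (MvPolynomial (Fin 2 ⊕ Fin n) ℂ) :=
  Ideal.span {X (Sum.inl 0), rename Sum.inr (f i)}

/-- The projection `ℂ[u,v,x] → (R/(fᵢ))[v]` killing `u` and `fᵢ`. -/
noncomputable def phi (i : Fin t) :
    MvPolynomial (Fin 2 ⊕ Fin n) ℂ →+* Polynomial (Rn n ⧸ Ideal.span {f i}) :=
  ((Polynomial.mapRingHom (Ideal.Quotient.mk (Ideal.span {f i}))).comp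
    (Polynomial.evalRingHom (0 : Polynomial (Rn n)))).comp (EE n : _ →+* _)

lemma ker_phi (i : Fin t) : RingHom.ker (phi n t f i) = Jideal n t f i := by
  rw [phi, ← RingHom.comap_ker, ker_psi, Jideal]
  have h1 : (Polynomial.X : Polynomial (Polynomial (Rn n))) = EE n (X (Sum.inl 0)) :=
    (EE_u n).symm
  have h2 : (Polynomial.C (Polynomial.C (f i)) : Polynomial (Polynomial (Rn n))) =
      EE n (rename Sum.inr (f i)) := (EE_g n (f i)).symm
  rw [h1, h2]
  exact comap_span_pair (EE n) _ _

lemma f_prime (hirr : ∀ i, Irreducible (f i)) (i : Fin t) : Prime (f i) :=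
  UniqueFactorizationMonoid.irreducible_iff_prime.mp (hirr i)

lemma Jideal_isPrime (hirr : ∀ i, Irreducible (f i)) (i : Fin t) :
    (Jideal n t f i).IsPrime := by
  rw [← ker_phi]
  haveI : (Ideal.span {f i}).IsPrime :=
    (Ideal.span_singleton_prime (f_prime n t f hirr i).ne_zero).mpr (f_prime n t f hirr i)
  exact RingHom.ker_isPrime _

lemma fi_dvd_gp (i : Fin t) (hai : 1 ≤ a i) : f i ∣ gp n t f a :=
  dvd_trans (dvd_pow_self (f i) (by omega)) (Finset.dvd_prod_of_mem _ (Finset.mem_univ i))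

lemma hyper_le_J (i : Fin t) (hai : 1 ≤ a i) : hyperIdeal n t f a ≤ Jideal n t f i := by
  rw [hyperIdeal, ← ker_phi, Ideal.span_le, Set.singleton_subset_iff, SetLike.mem_coe,
    RingHom.mem_ker, phi, RingHom.comp_apply, RingHom.comp_apply]
  have : ((EE n : MvPolynomial (Fin 2 ⊕ Fin n) ℂ →+* Polynomial (Polynomial (Rn n))))
      (X (Sum.inl 0) * X (Sum.inl 1) - ∏ i, (rename Sum.inr (f i)) ^ a i) =
        Polynomial.C (Polynomial.X : Polynomial (Rn n)) * Polynomial.X -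
          Polynomial.C (Polynomial.C (gp n t f a)) := EE_hyper n t f a
  rw [this]
  have hz : (Ideal.Quotient.mk (Ideal.span {f i})) (gp n t f a) = 0 := by
    rw [Ideal.Quotient.eq_zero_iff_mem, Ideal.mem_span_singleton]
    exact fi_dvd_gp n t f a i hai
  simp [Polynomial.eval_C, hz]

lemma Pideal_eq_map (i : Fin t) :
    Pideal n t f a i =
      Ideal.map (Ideal.Quotient.mk (hyperIdeal n t f a)) (Jideal n t f i) := by
  rw [Jideal, Ideal.map_span, Set.image_pair, Pideal]

lemma Pideal_isPrime (hirr : ∀ i, Irreducible (f i)) (i : Fin t) (hai : 1 ≤ a i) :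
    (Pideal n t f a i).IsPrime := by
  rw [Pideal_eq_map]
  haveI := Jideal_isPrime n t f hirr i
  exact Ideal.map_isPrime_of_surjective Ideal.Quotient.mk_surjective
    (by rw [Ideal.mk_ker]; exact hyper_le_J n t f a i hai)

lemma mem_Pideal_iff (i : Fin t) (hai : 1 ≤ a i) {x : MvPolynomial (Fin 2 ⊕ Fin n) ℂ} :
    Ideal.Quotient.mk (hyperIdeal n t f a) x ∈ Pideal n t f a i ↔ x ∈ Jideal n t f i := by
  rw [Pideal_eq_map]
  exact Ideal.mem_quotient_iff_mem (hyper_le_J n t f a i hai)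

lemma v_not_mem_J (hirr : ∀ i, Irreducible (f i)) (i : Fin t) :
    X (Sum.inl 1) ∉ Jideal n t f i := by
  haveI : (Ideal.span {f i}).IsPrime :=
    (Ideal.span_singleton_prime (f_prime n t f hirr i).ne_zero).mpr (f_prime n t f hirr i)
  rw [← ker_phi, RingHom.mem_ker, phi, RingHom.comp_apply, RingHom.comp_apply]
  have : ((EE n : MvPolynomial (Fin 2 ⊕ Fin n) ℂ →+* Polynomial (Polynomial (Rn n))))
      (X (Sum.inl 1)) = Polynomial.C (Polynomial.X : Polynomial (Rn n)) := EE_v n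
  rw [this]
  haveI : Nontrivial (Rn n ⧸ Ideal.span {f i}) :=
    Ideal.Quotient.nontrivial_iff.mpr (Ideal.IsPrime.ne_top ‹(Ideal.span {f i}).IsPrime›)
  simp [Polynomial.eval_C]

lemma fj_not_mem_J (hirr : ∀ i, Irreducible (f i))
    (hcop : ∀ i j, i ≠ j → IsRelPrime (f i) (f j)) (i j : Fin t) (hij : j ≠ i) :
    rename Sum.inr (f j) ∉ Jideal n t f i := by
  haveI hpr : (Ideal.span {f i}).IsPrime :=
    (Ideal.span_singleton_prime (f_prime n t f hirr i).ne_zero).mpr (f_prime n t f hirr i)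
  haveI : Nontrivial (Rn n ⧸ Ideal.span {f i}) := Ideal.Quotient.nontrivial_iff.mpr hpr.ne_top
  rw [← ker_phi, RingHom.mem_ker, phi, RingHom.comp_apply, RingHom.comp_apply]
  have : ((EE n : MvPolynomial (Fin 2 ⊕ Fin n) ℂ →+* Polynomial (Polynomial (Rn n))))
      (rename Sum.inr (f j)) = Polynomial.C (Polynomial.C (f j)) := EE_g n (f j)
  rw [this]
  intro hzero
  have : (Ideal.Quotient.mk (Ideal.span {f i})) (f j) = 0 := by
    simpa [Polynomial.eval_C] using hzero
  rw [Ideal.Quotient.eq_zero_iff_mem, Ideal.mem_span_singleton] at this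
  exact (hirr i).not_isUnit ((hcop i j hij.symm) dvd_rfl this)

lemma X_u_not_mem_hyper (hirr : ∀ i, Irreducible (f i)) :
    X (Sum.inl 0) ∉ hyperIdeal n t f a := by
  intro hmem
  rw [hyperIdeal_eq_comap, Ideal.mem_comap] at hmem
  have hEu : ((EE n : MvPolynomial (Fin 2 ⊕ Fin n) ℂ →+* Polynomial (Polynomial (Rn n))))
      (X (Sum.inl 0)) = Polynomial.X := EE_u n
  rw [hEu] at hmem
  replace hmem : Hp n t f a ∣ _ := let ⟨k, hk⟩ := Ideal.mem_span_singleton'.mp hmem; Dvd.intro_left k hk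
  obtain ⟨k, hk⟩ := hmem
  have h0 : (Polynomial.X : Polynomial (Polynomial (Rn n))).coeff 0 =
      ((Hp n t f a) * k).coeff 0 := by rw [← hk]
  rw [Polynomial.coeff_X_zero, Polynomial.mul_coeff_zero] at h0
  have hHp0 : (Hp n t f a).coeff 0 = -Polynomial.C (gp n t f a) := by
    simp [Hp]
  rw [hHp0] at h0
  have hk0 : k.coeff 0 = 0 := by
    rcases mul_eq_zero.mp h0.symm with h | h
    · exact absurd (neg_eq_zero.mp h)
        (by simpa using gp_ne_zero n t f a hirr)
    · exact h
  obtain ⟨k2, hk2⟩ := (Polynomial.X_dvd_iff).mpr hk0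
  rw [hk2, show Hp n t f a * (Polynomial.X * k2) =
    Polynomial.X * (Hp n t f a * k2) by ring] at hk
  have hone : (1 : Polynomial (Polynomial (Rn n))) = Hp n t f a * k2 :=
    mul_left_cancel₀ (Polynomial.X_ne_zero (R := Polynomial (Rn n)))
      (by rw [mul_one, ← hk])
  exact (Hp_prime n t f a hirr).not_isUnit (IsUnit.of_mul_eq_one _ hone.symm)

lemma quot_mul_eq :
    Ideal.Quotient.mk (hyperIdeal n t f a) (X (Sum.inl 0)) *
        Ideal.Quotient.mk (hyperIdeal n t f a) (X (Sum.inl 1)) =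
      ∏ j, (Ideal.Quotient.mk (hyperIdeal n t f a) (rename Sum.inr (f j))) ^ a j := by
  rw [← map_mul]
  have : (∏ j, (Ideal.Quotient.mk (hyperIdeal n t f a) (rename Sum.inr (f j))) ^ a j) =
      Ideal.Quotient.mk (hyperIdeal n t f a) (∏ j, (rename Sum.inr (f j)) ^ a j) := by
    rw [map_prod]
    simp [map_pow]
  rw [this]
  rw [Ideal.Quotient.eq]
  exact Ideal.subset_span rfl

lemma Hp_degree : (Hp n t f a).degree = 1 := by
  have : Hp n t f a = Polynomial.C (Polynomial.X : Polynomial (Rn n)) * Polynomial.X +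
      Polynomial.C (-(Polynomial.C (gp n t f a))) := by
    rw [Hp, map_neg]; ring
  rw [this]
  exact Polynomial.degree_linear Polynomial.X_ne_zero

lemma Fi_not_mem_hyper (hirr : ∀ i, Irreducible (f i)) (i : Fin t) :
    rename Sum.inr (f i) ∉ hyperIdeal n t f a := by
  intro hmem
  rw [hyperIdeal_eq_comap, Ideal.mem_comap] at hmem
  have hEg : ((EE n : MvPolynomial (Fin 2 ⊕ Fin n) ℂ →+* Polynomial (Polynomial (Rn n))))
      (rename Sum.inr (f i)) = Polynomial.C (Polynomial.C (f i)) := EE_g n (f i)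
  rw [hEg] at hmem
  replace hmem : Hp n t f a ∣ _ := let ⟨k, hk⟩ := Ideal.mem_span_singleton'.mp hmem; Dvd.intro_left k hk
  have hne : (Polynomial.C (Polynomial.C (f i)) : Polynomial (Polynomial (Rn n))) ≠ 0 := by
    simpa using (hirr i).ne_zero
  have := Polynomial.degree_le_of_dvd hmem hne
  rw [Hp_degree] at this
  exact absurd (this.trans Polynomial.degree_C_le) (by norm_num)

end HyperAux

open HyperAux

/-- **`div(u) = ∑ᵢ aᵢ · 𝔭ᵢ` in the hypersurface ring.**
For `A = ℂ[u,v,x₁,…,xₙ]/(uv - f₁^{a₁} ⋯ f_t^{a_t})` with the `fᵢ` non-constant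
irreducible pairwise coprime polynomials and `aᵢ ≥ 1`, and `𝔭ᵢ = (u, fᵢ)`:
the valuation of `u` at `𝔭ᵢ` equals `aᵢ`, i.e. `ν_{𝔭ᵢ}(u) = aᵢ`, and the valuation of
`u` at every other height one prime vanishes; that is, `div(u) = ∑_{i=1}^t aᵢ · 𝔭ᵢ`. -/
theorem hyperRing_div_u (n t : ℕ) (f : Fin t → MvPolynomial (Fin n) ℂ)
    (hirr : ∀ i, Irreducible (f i)) (hcop : ∀ i j, i ≠ j → IsRelPrime (f i) (f j))
    (a : Fin t → ℕ) (ha : ∀ i, 1 ≤ a i) :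
    (∀ i : Fin t, ∃ hp : (Pideal n t f a i).IsPrime,
        @ordAt (HyperRing n t f a) _ (Pideal n t f a i) hp (uElem n t f a) =
          (a i : ℕ∞)) ∧
    (∀ (q : Ideal (HyperRing n t f a)) (hq : q.IsPrime),
        Order.height (⟨q, hq⟩ : PrimeSpectrum (HyperRing n t f a)) = 1 →
        (∀ i : Fin t, q ≠ Pideal n t f a i) →
        @ordAt (HyperRing n t f a) _ q hq (uElem n t f a) = 0) := by
  classical
  haveI hIP : (hyperIdeal n t f a).IsPrime := hyperIdeal_isPrime n t f a hirr
  haveI : IsDomain (HyperRing n t f a) := Ideal.Quotient.isDomain _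
  set mk := Ideal.Quotient.mk (hyperIdeal n t f a) with hmk
  -- `u ≠ 0` in `A`
  have hune : mk (X (Sum.inl 0)) ≠ 0 := fun h =>
    X_u_not_mem_hyper n t f a hirr (Ideal.Quotient.eq_zero_iff_mem.mp h)
  constructor
  · -- the valuation at `𝔭ᵢ` is `aᵢ`
    intro i
    have hp : (Pideal n t f a i).IsPrime := Pideal_isPrime n t f a hirr i (ha i)
    refine ⟨hp, ?_⟩
    haveI := hp
    set p : Ideal (HyperRing n t f a) := Pideal n t f a i with hpdef
    set L := Localization.AtPrime p with hL
    set alg : HyperRing n t f a →+* L := algebraMap (HyperRing n t f a) L with halg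
    -- basic membership facts
    have hvp : mk (X (Sum.inl 1)) ∉ p := fun h =>
      v_not_mem_J n t f hirr i ((mem_Pideal_iff n t f a i (ha i)).mp h)
    have hfjp : ∀ j, j ≠ i → mk (rename Sum.inr (f j)) ∉ p := fun j hj h =>
      fj_not_mem_J n t f hirr hcop i j hj ((mem_Pideal_iff n t f a i (ha i)).mp h)
    have hfi_in : mk (rename Sum.inr (f i)) ∈ p :=
      Ideal.subset_span (Set.mem_insert_of_mem _ rfl)
    have hu_in : mk (X (Sum.inl 0)) ∈ p := Ideal.subset_span (Set.mem_insert _ _)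
    -- the key multiplicative identity in `A`
    have key : mk (X (Sum.inl 0)) * mk (X (Sum.inl 1)) =
        mk (rename Sum.inr (f i)) ^ a i *
          ∏ j ∈ Finset.univ.erase i, mk (rename Sum.inr (f j)) ^ a j := by
      rw [quot_mul_eq n t f a,
        ← Finset.mul_prod_erase Finset.univ (fun j => mk (rename Sum.inr (f j)) ^ a j)
          (Finset.mem_univ i)]
    -- notation in the localization
    set u' : L := alg (mk (X (Sum.inl 0))) with hu'
    set v' : L := alg (mk (X (Sum.inl 1))) with hv'
    set π : L := alg (mk (rename Sum.inr (f i))) with hπ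
    set rest : L := alg (∏ j ∈ Finset.univ.erase i, mk (rename Sum.inr (f j)) ^ a j)
      with hrest
    have keyL : u' * v' = π ^ a i * rest := by
      rw [hu', hv', hπ, hrest, ← map_mul alg, key, map_mul alg, map_pow]
    -- `v` and the remaining factors are units in the localization
    have hvunit : IsUnit v' := IsLocalization.map_units L (⟨_, hvp⟩ : p.primeCompl)
    have hrestp : (∏ j ∈ Finset.univ.erase i, mk (rename Sum.inr (f j)) ^ a j) ∉ p := by
      intro hmem
      obtain ⟨j, hjs, hjmem⟩ := Ideal.IsPrime.prod_mem_iff.mp hmem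
      exact hfjp j (Finset.mem_erase.mp hjs).1 (hp.mem_of_pow_mem _ hjmem)
    have hrestunit : IsUnit rest := IsLocalization.map_units L (⟨_, hrestp⟩ : p.primeCompl)
    -- `π ≠ 0`
    have halginj : Function.Injective alg :=
      IsLocalization.injective L p.primeCompl_le_nonZeroDivisors
    have hπ0 : π ≠ 0 := by
      rw [hπ]
      intro h
      have : mk (rename Sum.inr (f i)) = 0 := halginj (by simpa using h)
      exact Fi_not_mem_hyper n t f a hirr i (Ideal.Quotient.eq_zero_iff_mem.mp this)
    obtain ⟨w, hw⟩ := hvunit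
    -- `u' = π ^ (a i) * rest * w⁻¹`
    have hufact : u' = π ^ a i * rest * ↑w⁻¹ := by
      have h2 : u' * ↑w = π ^ a i * rest := by rw [hw]; exact keyL
      have h3 : (↑w : L) * ↑w⁻¹ = 1 := by simp
      calc u' = u' * (↑w * ↑w⁻¹) := by rw [h3, mul_one]
        _ = u' * ↑w * ↑w⁻¹ := by ring
        _ = π ^ a i * rest * ↑w⁻¹ := by rw [h2]
    have hdvd_pow : π ^ a i ∣ u' := ⟨rest * ↑w⁻¹, by rw [hufact]; ring⟩
    have hdvd : π ∣ u' := dvd_trans (dvd_pow_self π (Nat.one_le_iff_ne_zero.mp (ha i))) hdvd_pow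
    -- the maximal ideal of the localization is generated by `π`
    set m : Ideal L := Ideal.map (algebraMap (HyperRing n t f a) L) p with hm
    have hmπ : m = Ideal.span {π} := by
      apply le_antisymm
      · rw [hm]
        apply Ideal.map_le_iff_le_comap.mpr
        have hps : p = Ideal.span
            {mk (X (Sum.inl 0)), mk (rename Sum.inr (f i))} := rfl
        refine le_trans (le_of_eq hps) ?_
        rw [Ideal.span_le]
        rintro x (rfl | rfl)
        · rw [SetLike.mem_coe, Ideal.mem_comap, Ideal.mem_span_singleton, ← halg, ← hu']
          exact hdvd
        · rw [SetLike.mem_coe, Ideal.mem_comap, Ideal.mem_span_singleton, ← halg, ← hπ]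
      · rw [Ideal.span_singleton_le_iff_mem, hm, hπ]
        exact Ideal.mem_map_of_mem _ hfi_in
    -- membership and non-membership in powers of `m`
    have hmem_a : u' ∈ m ^ a i := by
      rw [hmπ, Ideal.span_singleton_pow, Ideal.mem_span_singleton]
      exact hdvd_pow
    have hnotmem : u' ∉ m ^ (a i + 1) := by
      rw [hmπ, Ideal.span_singleton_pow, Ideal.mem_span_singleton]
      rintro ⟨x, hx⟩
      have hcan : π ^ a i * rest = π ^ a i * (π * x * ↑w) := by
        rw [← keyL, hx, hw]
        ring
      have hrest_eq : rest = π * (x * ↑w) :=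
        mul_left_cancel₀ (pow_ne_zero _ hπ0) (by rw [hcan]; ring)
      have : IsUnit π := isUnit_of_dvd_unit ⟨x * ↑w, hrest_eq⟩ hrestunit
      rw [hπ] at this
      exact (IsLocalization.AtPrime.isUnit_to_map_iff L p _).mp this hfi_in
    -- compute the supremum
    rw [ordAt]
    apply le_antisymm
    · refine iSup₂_le fun k hk => ?_
      have hkle : k ≤ a i := by
        by_contra hcon
        exact hnotmem (Ideal.pow_le_pow_right (by omega) hk)
      exact_mod_cast Nat.cast_le.mpr hkle
    · exact le_iSup₂ (f := fun (k : ℕ) (_ : k ∈ _) => (k : ℕ∞)) (a i) hmem_a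
  · -- the valuation vanishes at all other height-one primes
    intro q hq hht hne
    haveI := hq
    -- `u ∉ q`
    have hunotq : mk (X (Sum.inl 0)) ∉ q := by
      intro hu
      have hprod : ∏ j, mk (rename Sum.inr (f j)) ^ a j ∈ q := by
        rw [← quot_mul_eq n t f a]
        exact Ideal.mul_mem_right _ _ hu
      obtain ⟨j, -, hj⟩ := Ideal.IsPrime.prod_mem_iff.mp hprod
      have hjq : mk (rename Sum.inr (f j)) ∈ q := hq.mem_of_pow_mem _ hj
      have hle : Pideal n t f a j ≤ q := by
        rw [Pideal]
        exact Ideal.span_le.mpr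
          (Set.insert_subset_iff.mpr ⟨hu, Set.singleton_subset_iff.mpr hjq⟩)
      have hlt : Pideal n t f a j < q := hle.lt_of_ne (Ne.symm (hne j))
      have hpj : (Pideal n t f a j).IsPrime := Pideal_isPrime n t f a hirr j (ha j)
      have hbot : (⊥ : Ideal (HyperRing n t f a)) < Pideal n t f a j := by
        rw [bot_lt_iff_ne_bot]
        intro hb
        apply hune
        have : mk (X (Sum.inl 0)) ∈ Pideal n t f a j :=
          Ideal.subset_span (Set.mem_insert _ _)
        rw [hb, Ideal.mem_bot] at this
        exact this
      set b0 : PrimeSpectrum (HyperRing n t f a) := ⟨⊥, Ideal.bot_prime⟩ with hb0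
      set pj : PrimeSpectrum (HyperRing n t f a) := ⟨Pideal n t f a j, hpj⟩ with hpjdef
      set qq : PrimeSpectrum (HyperRing n t f a) := ⟨q, hq⟩ with hqq
      have hlt2 : pj < qq := (PrimeSpectrum.asIdeal_lt_asIdeal pj qq).mp hlt
      have hlt1 : b0 < pj := (PrimeSpectrum.asIdeal_lt_asIdeal b0 pj).mp hbot
      have hfin2 : Order.height pj < ⊤ := by
        calc Order.height pj ≤ Order.height qq := Order.height_mono hlt2.le
          _ = 1 := hht
          _ < ⊤ := by exact lt_top_iff_ne_top.mpr (by simp)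
      have h2 : Order.height pj < 1 := by
        have := Order.height_strictMono hlt2 hfin2
        rwa [hht] at this
      have hfin1 : Order.height b0 < ⊤ :=
        lt_of_le_of_lt (Order.height_mono hlt1.le) (lt_of_lt_of_le h2 le_top)
      have h1 : Order.height b0 < Order.height pj := Order.height_strictMono hlt1 hfin1
      rw [ENat.lt_one_iff_eq_zero.mp h2] at h1
      exact (not_lt_of_ge zero_le) h1
    -- hence the order vanishes
    rw [ordAt]
    apply le_antisymm _ zero_le
    refine iSup₂_le fun k hk => ?_
    have hk0 : k = 0 := by
      by_contra hkne
      apply hunotq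
      have hmem : algebraMap (HyperRing n t f a) (Localization.AtPrime q)
          (uElem n t f a) ∈ Ideal.map (algebraMap _ (Localization.AtPrime q)) q :=
        Ideal.pow_le_self hkne hk
      have hcomap := IsLocalization.comap_map_of_isPrime_disjoint q.primeCompl
        (Localization.AtPrime q) hq
        (Set.disjoint_left.mpr fun x hx hxq => hx hxq)
      rw [← hcomap]
      exact hmem
    simp [hk0]
end
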